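/- arXiv:2405.00082 — 3 statements merged into one kernel-verified Lean document; each statement's English description precedes it below -/
import Mathlib

section
/- First-order approximation of conjugation by a time evolution (Lemma 3.3). Let H, X ∈ ℂ^{N×N} with H Hermitian, and let t ∈ ℝ. Then ‖e^{iHt} X e^{−iHt} − (X + [iHt, X])‖_F ≤ (t²/2)·‖[H,[H,X]]‖_F. -/
open Complex Matrix
open scoped BigOperators

noncomputable section

/-- Commutator `[A, B] = A*B - B*A`. -/
def cm {α : Type*} [Ring α] (A B : α) : α := A * B - B * A

/-- Frobenius norm of a complex square matrix. -/
def frobNorm {m : Type*} [Fintype m] (M : Matrix m m ℂ) : ℝ :=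
  Real.sqrt (∑ x, ∑ y, ‖M x y‖ ^ 2)

/-- Matrix exponential. -/
def mexp {m : Type*} [Fintype m] [DecidableEq m] (M : Matrix m m ℂ) : Matrix m m ℂ :=
  NormedSpace.exp M

section Aux

attribute [local instance] Matrix.frobeniusNormedAddCommGroup Matrix.frobeniusNormedRing
  Matrix.frobeniusNormedAlgebra Matrix.frobeniusNormedSpace

variable {N : ℕ}

local notation "Mat" => Matrix (Fin N) (Fin N) ℂ

lemma frob_eq (M : Mat) : frobNorm M = ‖M‖ := by
  rw [Matrix.frobenius_norm_def, frobNorm, Real.sqrt_eq_rpow]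
  congr 1
  refine Finset.sum_congr rfl fun x _ => Finset.sum_congr rfl fun y _ => ?_
  rw [← Real.rpow_natCast ‖M x y‖ 2]
  norm_num

lemma sumSq_eq_trace (Z : Mat) :
    ∑ x, ∑ y, ‖Z x y‖ ^ 2 = (Matrix.trace (Zᴴ * Z)).re := by
  simp only [Matrix.trace, Matrix.diag, Matrix.mul_apply, Matrix.conjTranspose_apply]
  rw [Complex.re_sum]
  rw [Finset.sum_comm]
  refine Finset.sum_congr rfl fun x _ => ?_
  rw [Complex.re_sum]
  refine Finset.sum_congr rfl fun y _ => ?_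
  simp [mul_comm, Complex.star_def, Complex.mul_conj, Complex.sq_norm]

lemma frob_conj_unitary (U W Y : Mat) (hUW : U * W = 1) (hWU : W * U = 1)
    (hadj : Uᴴ = W) : ‖U * Y * W‖ = ‖Y‖ := by
  have hWadj : Wᴴ = U := by rw [← hadj, Matrix.conjTranspose_conjTranspose]
  have key : (U * Y * W)ᴴ * (U * Y * W) = Wᴴ * (Yᴴ * (Y * W)) := by
    simp only [Matrix.conjTranspose_mul, hadj, Matrix.mul_assoc]
    rw [← Matrix.mul_assoc W U, hWU, Matrix.one_mul]
  have tr : Matrix.trace ((U * Y * W)ᴴ * (U * Y * W)) = Matrix.trace (Yᴴ * Y) := by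
    rw [key, hWadj, Matrix.trace_mul_comm]
    simp only [Matrix.mul_assoc]
    rw [hWU, Matrix.mul_one]
  rw [← frob_eq, ← frob_eq, frobNorm, frobNorm, sumSq_eq_trace, sumSq_eq_trace, tr]

lemma key_deriv (A Y : Mat) (s : ℝ) :
    HasDerivAt (fun u : ℝ => NormedSpace.exp (u • A) * Y * NormedSpace.exp ((-u) • A))
      (NormedSpace.exp (s • A) * cm A Y * NormedSpace.exp ((-s) • A)) s := by
  have h1 : HasDerivAt (fun u : ℝ => NormedSpace.exp (u • A) * Y)
      (NormedSpace.exp (s • A) * A * Y) s := (hasDerivAt_exp_smul_const A s).mul_const Y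
  have h2 : HasDerivAt (fun u : ℝ => NormedSpace.exp ((-u) • A))
      (-A * NormedSpace.exp ((-s) • A)) s := by
    have := hasDerivAt_exp_smul_const' (𝕂 := ℝ) (-A) s
    simp only [smul_neg, ← neg_smul] at this
    exact this
  have := h1.mul h2
  refine this.congr_deriv ?_
  rw [cm]
  noncomm_ring

lemma aux_bound (A X : Mat) (hA : Aᴴ = -A) (t : ℝ) (ht : 0 ≤ t) :
    ‖NormedSpace.exp (t • A) * X * NormedSpace.exp ((-t) • A) - X - t • cm A X‖
      ≤ t ^ 2 / 2 * ‖cm A (cm A X)‖ := by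
  set E : ℝ → Mat := fun s => NormedSpace.exp (s • A) with hE
  have hE0 : E 0 = 1 := by simp [hE, NormedSpace.exp_zero]
  have hEmul : ∀ s : ℝ, E s * E (-s) = 1 := by
    intro s
    have hc : Commute (s • A) ((-s) • A) := by
      simp only [neg_smul]; exact (Commute.refl (s • A)).neg_right
    rw [hE]
    show NormedSpace.exp (s • A) * NormedSpace.exp ((-s) • A) = 1
    rw [← Matrix.exp_add_of_commute _ _ hc]
    simp [NormedSpace.exp_zero]
  have hEadj : ∀ s : ℝ, (E s)ᴴ = E (-s) := by
    intro s
    rw [hE]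
    rw [← Matrix.exp_conjTranspose]
    congr 1
    rw [Matrix.conjTranspose_smul, hA]
    simp [neg_smul, smul_neg]
  have hinv : ∀ s : ℝ, ‖E s * cm A (cm A X) * E (-s)‖ = ‖cm A (cm A X)‖ := by
    intro s
    refine frob_conj_unitary _ _ _ (hEmul s) ?_ (hEadj s)
    have := hEmul (-s); rwa [neg_neg] at this
  set K := ‖cm A (cm A X)‖ with hK
  -- inner MVT: ψ s = E s * cm A X * E (-s) - cm A X,  ‖ψ s‖ ≤ K * s on [0, t]
  have inner : ∀ s ∈ Set.Icc (0:ℝ) t, ‖E s * cm A X * E (-s) - cm A X‖ ≤ K * s := by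
    intro s hs
    have h := norm_image_sub_le_of_norm_deriv_le_segment'
      (f := fun u => E u * cm A X * E (-u)) (a := 0) (b := t)
      (f' := fun u => E u * cm A (cm A X) * E (-u)) (C := K)
      (fun x _ => (key_deriv A (cm A X) x).hasDerivWithinAt)
      (fun x _ => le_of_eq (hinv x)) s hs
    simpa only [neg_zero, hE0, Matrix.one_mul, Matrix.mul_one, sub_zero] using h
  -- outer MVT
  set φ : ℝ → Mat := fun s => E s * X * E (-s) - X - s • cm A X with hφ
  have hφ' : ∀ s : ℝ, HasDerivAt φ (E s * cm A X * E (-s) - cm A X) s := by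
    intro s
    have h1 := key_deriv A X s
    have h2 : HasDerivAt (fun u : ℝ => X + u • cm A X) (cm A X) s := by
      have := (hasDerivAt_id s).smul_const (cm A X)
      exact (this.const_add X).congr_deriv (one_smul ℝ _)
    have := h1.sub h2
    refine HasDerivAt.congr_of_eventuallyEq this (Filter.Eventually.of_forall fun u => ?_)
    exact sub_sub _ _ _
  have hφ0 : φ 0 = 0 := by
    simp [hφ, hE0]
  have main := image_norm_le_of_norm_deriv_right_le_deriv_boundary
    (f := φ) (a := 0) (b := t)
    (f' := fun s => E s * cm A X * E (-s) - cm A X)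
    (B := fun s => K / 2 * s ^ 2) (B' := fun s => K * s)
    (fun x _ => (hφ' x).continuousAt.continuousWithinAt)
    (fun x _ => (hφ' x).hasDerivWithinAt)
    (by simp [hφ0])
    (fun x => by
      have := (hasDerivAt_pow 2 x).const_mul (K / 2)
      refine this.congr_deriv ?_
      ring)
    (fun x hx => inner x ⟨hx.1, le_of_lt hx.2⟩)
    (Set.right_mem_Icc.2 ht)
  calc ‖φ t‖ ≤ K / 2 * t ^ 2 := main
    _ = t ^ 2 / 2 * K := by ring

lemma aux_bound' (A X : Mat) (hA : Aᴴ = -A) (t : ℝ) :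
    ‖NormedSpace.exp (t • A) * X * NormedSpace.exp ((-t) • A) - X - t • cm A X‖
      ≤ t ^ 2 / 2 * ‖cm A (cm A X)‖ := by
  rcases le_or_gt 0 t with ht | ht
  · exact aux_bound A X hA t ht
  · have h := aux_bound (-A) X (by rw [Matrix.conjTranspose_neg, hA, neg_neg]) (-t) (by linarith)
    have e1 : (-t) • (-A) = t • A := by rw [smul_neg, neg_smul, neg_neg]
    have e2 : (-(-t)) • (-A) = (-t) • A := by rw [neg_neg, smul_neg, ← neg_smul]
    have e3 : cm (-A) X = -(cm A X) := by
      simp only [cm, Matrix.neg_mul, Matrix.mul_neg, neg_sub_neg]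
      exact (neg_sub _ _).symm
    have e4 : cm (-A) (-(cm A X)) = cm A (cm A X) := by
      simp only [cm, Matrix.neg_mul, Matrix.mul_neg, neg_neg]
    rw [e1, e2, e3, e4, smul_neg, ← neg_smul, neg_neg, neg_sq] at h
    exact h

lemma smul_cm_left (c : ℂ) (B X : Mat) : cm (c • B) X = c • cm B X := by
  simp only [cm, Matrix.smul_mul, Matrix.mul_smul, smul_sub]

lemma smul_cm_right (c : ℂ) (B X : Mat) : cm B (c • X) = c • cm B X := by
  simp only [cm, Matrix.smul_mul, Matrix.mul_smul, smul_sub]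

lemma real_smul_comm (t : ℝ) (M : Mat) : (Complex.I * (t : ℂ)) • M = t • (Complex.I • M) := by
  ext i j
  simp [Matrix.smul_apply, Complex.real_smul]
  ring

/-- (Lemma 3.3) -/
theorem first_order_approx {N : ℕ} (H X : Matrix (Fin N) (Fin N) ℂ)
    (hH : H.IsHermitian) (t : ℝ) :
    frobNorm (mexp ((Complex.I * (t : ℂ)) • H) * X * mexp ((-(Complex.I * (t : ℂ))) • H)
        - (X + cm ((Complex.I * (t : ℂ)) • H) X))
      ≤ t ^ 2 / 2 * frobNorm (cm H (cm H X)) := by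
  have hHH : Hᴴ = H := hH
  have hA : (Complex.I • H)ᴴ = -(Complex.I • H) := by
    rw [Matrix.conjTranspose_smul, hHH]
    simp [Complex.star_def, Complex.conj_I, neg_smul]
  have key := aux_bound' (Complex.I • H) X hA t
  have m1 : mexp ((Complex.I * (t : ℂ)) • H) = NormedSpace.exp (t • (Complex.I • H)) := by
    rw [mexp, real_smul_comm]
  have m2 : mexp ((-(Complex.I * (t : ℂ))) • H) = NormedSpace.exp ((-t) • (Complex.I • H)) := by
    rw [mexp, show ((-(Complex.I * (t : ℂ))) • H) = (-t) • (Complex.I • H) by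
      rw [← real_smul_comm]; congr 1; push_cast; ring]
  have c1 : cm ((Complex.I * (t : ℂ)) • H) X = t • cm (Complex.I • H) X := by
    rw [smul_cm_left, real_smul_comm, smul_cm_left]
  have c2 : cm (Complex.I • H) (cm (Complex.I • H) X) = -(cm H (cm H X)) := by
    rw [smul_cm_left, smul_cm_left, smul_cm_right, smul_smul, Complex.I_mul_I, neg_one_smul]
  rw [frob_eq, frob_eq, m1, m2, c1]
  calc ‖NormedSpace.exp (t • (Complex.I • H)) * X * NormedSpace.exp ((-t) • (Complex.I • H))
        - (X + t • cm (Complex.I • H) X)‖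
      = ‖NormedSpace.exp (t • (Complex.I • H)) * X * NormedSpace.exp ((-t) • (Complex.I • H))
        - X - t • cm (Complex.I • H) X‖ := by rw [sub_add_eq_sub_sub]
    _ ≤ t ^ 2 / 2 * ‖cm (Complex.I • H) (cm (Complex.I • H) X)‖ := key
    _ = t ^ 2 / 2 * ‖cm H (cm H X)‖ := by rw [c2, norm_neg]

end Aux

end
end

section
/- Pauli pattern counting (Lemma 3.4). For X ∈ 𝒫 let 𝒮_X = {(P,Q) ∈ 𝒫_k × 𝒫_{k'} : [P,Q] = 2iX or [P,Q] = −2iX}, and define the pattern of (P,Q) ∈ 𝒮_X as the pair of sets (supp(P) ∩ supp(X), supp(Q) ∩ supp(X)); let 𝒮_X[S,T] denote the set of elements of 𝒮_X whose pattern is (S,T). Then: (a) for every X ∈ 𝒫, the set of patterns occurring among elements of 𝒮_X has at most (2(k+k'))^k elements; (b) for every pair (P,Q) ∈ 𝒫_k × 𝒫_{k'}, the number of triples (Y,S,T) with Y ∈ 𝒫 such that the class 𝒮_Y[S,T] contains both a pair whose first component is P and a pair whose second component is Q is at most (4(k+k'))^k; moreover if supp(P) ∩ supp(Q) = ∅ there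 are no such triples. -/
open Complex Matrix
open scoped BigOperators Classical

noncomputable section

/-- The space of `n`-qubit operators, as matrices indexed by bit-strings. -/
abbrev QMat (n : ℕ) := Matrix (Fin n → Fin 2) (Fin n → Fin 2) ℂ

/-- The single-qubit Pauli matrices, indexed so that `0 = σ_I`, `1 = σ_x`, `2 = σ_y`,
`3 = σ_z`. -/
def pauli1 (a : Fin 4) : Matrix (Fin 2) (Fin 2) ℂ :=
  if a = 0 then 1
  else if a = 1 then !![0, 1; 1, 0]
  else if a = 2 then !![0, -Complex.I; Complex.I, 0]
  else !![1, 0; 0, -1]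

/-- The `n`-qubit Pauli (Kronecker product of single-qubit Paulis) described by
`p : Fin n → Fin 4`. -/
def PauliOp {n : ℕ} (p : Fin n → Fin 4) : QMat n :=
  Matrix.of fun x y => ∏ i, pauli1 (p i) (x i) (y i)

/-- The support of a Pauli: the set of qubits where it acts non-trivially. -/
def psupp {n : ℕ} (p : Fin n → Fin 4) : Finset (Fin n) :=
  Finset.univ.filter fun i => p i ≠ 0

/-- The coefficient of the Pauli `p` in the Pauli expansion `M = Σ_Q c_Q Q`. -/
def pauliCoeff {n : ℕ} (M : QMat n) (p : Fin n → Fin 4) : ℂ :=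
  Matrix.trace (M * PauliOp p) / (2 ^ n : ℂ)

/-- The local norm `‖M‖₍₁₎ = max_i Σ_{Q : i ∈ supp(Q)} |c_Q|`. -/
def lonorm {n : ℕ} (M : QMat n) : ℝ :=
  ⨆ i : Fin n, ∑ p : Fin n → Fin 4,
    if i ∈ psupp p then ‖pauliCoeff M p‖ else 0

/-- The local norm `‖M‖₍₂₎ = max_i (Σ_{Q : i ∈ supp(Q)} |c_Q|²)^{1/2}`. -/
def ltnorm {n : ℕ} (M : QMat n) : ℝ :=
  ⨆ i : Fin n, Real.sqrt (∑ p : Fin n → Fin 4,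
    if i ∈ psupp p then ‖pauliCoeff M p‖ ^ 2 else 0)

/-- `H` is the Hamiltonian `Σ_a λ_a E_a` with distinct non-identity Pauli terms. -/
def IsHamiltonian {n m : ℕ} (lam : Fin m → ℝ) (E : Fin m → Fin n → Fin 4) (H : QMat n) : Prop :=
  Function.Injective E ∧ (∀ a, E a ≠ fun _ => 0) ∧ H = ∑ a, (lam a : ℂ) • PauliOp (E a)

/-- Every term of the Hamiltonian has support of size at most `k`. -/
def KLocal {n m : ℕ} (E : Fin m → Fin n → Fin 4) (k : ℕ) : Prop :=
  ∀ a, (psupp (E a)).card ≤ k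

/-- `[P, Q] = 2iX` or `[P, Q] = −2iX` (as matrices). -/
def inCommClass {n : ℕ} (X P Q : Fin n → Fin 4) : Prop :=
  cm (PauliOp P) (PauliOp Q) = ((2 : ℂ) * Complex.I) • PauliOp X ∨
  cm (PauliOp P) (PauliOp Q) = (-((2 : ℂ) * Complex.I)) • PauliOp X

/-- `𝒮_X`: the pairs `(P,Q) ∈ 𝒫_k × 𝒫_{k'}` with `[P,Q] = ±2iX`. -/
def SX (n k k' : ℕ) (X : Fin n → Fin 4) : Finset ((Fin n → Fin 4) × (Fin n → Fin 4)) :=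
  Finset.univ.filter fun PQ =>
    (psupp PQ.1).card ≤ k ∧ (psupp PQ.2).card ≤ k' ∧ inCommClass X PQ.1 PQ.2

/-- The pattern of the pair `(P,Q)` relative to `X`:
`(supp(P) ∩ supp(X), supp(Q) ∩ supp(X))`. -/
def patternOf {n : ℕ} (X : Fin n → Fin 4) (PQ : (Fin n → Fin 4) × (Fin n → Fin 4)) :
    Finset (Fin n) × Finset (Fin n) :=
  (psupp PQ.1 ∩ psupp X, psupp PQ.2 ∩ psupp X)

/-- The triples `(Y, S, T)` such that the class `𝒮_Y[S,T]` contains both a pair with first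
component `P` and a pair with second component `Q`. -/
def relevantClasses (n k k' : ℕ) (P Q : Fin n → Fin 4) :
    Finset ((Fin n → Fin 4) × Finset (Fin n) × Finset (Fin n)) :=
  Finset.univ.filter fun YST =>
    (∃ R, (P, R) ∈ SX n k k' YST.1 ∧ patternOf YST.1 (P, R) = (YST.2.1, YST.2.2)) ∧
    (∃ R', (R', Q) ∈ SX n k k' YST.1 ∧ patternOf YST.1 (R', Q) = (YST.2.1, YST.2.2))

def pmul : Fin 4 → Fin 4 → Fin 4 := ![![0,1,2,3],![1,0,3,2],![2,3,0,1],![3,2,1,0]]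

def pphase : Fin 4 → Fin 4 → ℂ :=
  ![![1,1,1,1],![1,1,Complex.I,-Complex.I],![1,-Complex.I,1,Complex.I],![1,Complex.I,-Complex.I,1]]

lemma pauli1_mul (a b : Fin 4) :
    pauli1 a * pauli1 b = pphase a b • pauli1 (pmul a b) := by
  fin_cases a <;> fin_cases b <;>
    simp [pauli1, pmul, pphase, Matrix.one_fin_two, Matrix.mul_fin_two, Matrix.smul_of,
      Matrix.smul_cons, Matrix.smul_empty, Complex.I_mul_I] <;>
    norm_num [Matrix.vecHead, Matrix.vecTail, Matrix.smul_cons, Matrix.smul_empty, Complex.ext_iff]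
lemma pmul_eq_zero_iff (a b : Fin 4) : pmul a b = 0 ↔ a = b := by revert a b; decide

lemma pmul_comm' (a b : Fin 4) : pmul a b = pmul b a := by revert a b; decide

lemma pmul_zero_left (b : Fin 4) : pmul 0 b = b := by revert b; decide

lemma pphase_self (a : Fin 4) : pphase a a = 1 := by
  fin_cases a <;> simp [pphase]

lemma pphase_zero_left (b : Fin 4) : pphase 0 b = 1 := by
  fin_cases b <;> simp [pphase]

lemma pphase_zero_right (b : Fin 4) : pphase b 0 = 1 := by
  fin_cases b <;> simp [pphase, Matrix.vecHead, Matrix.vecTail]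

lemma PauliOp_mul {n : ℕ} (p q : Fin n → Fin 4) :
    PauliOp p * PauliOp q
      = (∏ i, pphase (p i) (q i)) • PauliOp (fun i => pmul (p i) (q i)) := by
  ext x y
  show ∑ z : Fin n → Fin 2, (∏ i, pauli1 (p i) (x i) (z i)) * ∏ i, pauli1 (q i) (z i) (y i)
    = (∏ i, pphase (p i) (q i)) * ∏ i, pauli1 (pmul (p i) (q i)) (x i) (y i)
  have key : ∀ i : Fin n, (pauli1 (p i) * pauli1 (q i)) (x i) (y i)
      = pphase (p i) (q i) * pauli1 (pmul (p i) (q i)) (x i) (y i) := by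
    intro i; rw [pauli1_mul]; rfl
  calc ∑ z : Fin n → Fin 2, (∏ i, pauli1 (p i) (x i) (z i)) * ∏ i, pauli1 (q i) (z i) (y i)
      = ∑ z : Fin n → Fin 2, ∏ i, (pauli1 (p i) (x i) (z i) * pauli1 (q i) (z i) (y i)) := by
        simp [Finset.prod_mul_distrib]
    _ = ∏ i, ∑ a : Fin 2, (pauli1 (p i) (x i) a * pauli1 (q i) a (y i)) := by
        rw [Fintype.prod_sum]
    _ = ∏ i, (pauli1 (p i) * pauli1 (q i)) (x i) (y i) := by
        simp [Matrix.mul_apply]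
    _ = ∏ i, (pphase (p i) (q i) * pauli1 (pmul (p i) (q i)) (x i) (y i)) := by
        exact Finset.prod_congr rfl fun i _ => key i
    _ = _ := by rw [Finset.prod_mul_distrib]

lemma PauliOp_zero {n : ℕ} : PauliOp (fun _ : Fin n => (0 : Fin 4)) = 1 := by
  ext x y
  show (∏ i, pauli1 0 (x i) (y i)) = _
  have : ∀ i : Fin n, pauli1 0 (x i) (y i) = if x i = y i then 1 else 0 := by
    intro i; simp [pauli1, Matrix.one_apply]
  simp only [this, Finset.prod_boole]
  simp [Matrix.one_apply, funext_iff]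
lemma pauli1_tr (a : Fin 4) : ∑ x : Fin 2, pauli1 a x x = if a = 0 then 2 else 0 := by
  fin_cases a <;> simp [pauli1, Fin.sum_univ_two, Matrix.one_apply]

lemma PauliOp_trace {n : ℕ} (p : Fin n → Fin 4) :
    Matrix.trace (PauliOp p) = if p = (fun _ => 0) then (2 : ℂ) ^ n else 0 := by
  have : Matrix.trace (PauliOp p) = ∏ i, ∑ a : Fin 2, pauli1 (p i) a a := by
    rw [Fintype.prod_sum]
    rfl
  rw [this]
  simp only [pauli1_tr]
  by_cases h : p = fun _ => 0
  · subst h; simp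
  · rw [if_neg h]
    obtain ⟨i, hi⟩ : ∃ i, p i ≠ 0 := by
      by_contra hc; push_neg at hc; exact h (funext hc)
    exact Finset.prod_eq_zero (Finset.mem_univ i) (by rw [if_neg hi])

lemma pphase_ne_zero (a b : Fin 4) : pphase a b ≠ 0 := by
  fin_cases a <;> fin_cases b <;>
    simp [pphase, Matrix.vecHead, Matrix.vecTail, Complex.I_ne_zero]

lemma trace_PauliOp_mul {n : ℕ} (p q : Fin n → Fin 4) :
    Matrix.trace (PauliOp p * PauliOp q)
      = if p = q then (∏ i, pphase (p i) (q i)) * 2 ^ n else 0 := by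
  rw [PauliOp_mul, Matrix.trace_smul, PauliOp_trace, smul_eq_mul]
  by_cases h : p = q
  · subst h
    simp [funext_iff, pmul_eq_zero_iff]
  · rw [if_neg h, if_neg, mul_zero]
    simp only [funext_iff, pmul_eq_zero_iff]
    exact fun hc => h (funext hc)

lemma pphase_self_prod {n : ℕ} (p : Fin n → Fin 4) :
    (∏ i, pphase (p i) (p i)) = 1 := by
  simp [pphase_self]

/-- Separation: two Pauli scalar multiples equal imply same Pauli or zero coefficients. -/
lemma pauli_smul_eq {n : ℕ} {A B : Fin n → Fin 4} {a b : ℂ}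
    (h : a • PauliOp A = b • PauliOp B) : (A = B ∧ a = b) ∨ (a = 0 ∧ b = 0) := by
  have h2 : (2 : ℂ) ^ n ≠ 0 := pow_ne_zero _ two_ne_zero
  by_cases hAB : A = B
  · subst hAB
    left
    refine ⟨rfl, ?_⟩
    have := congrArg (fun M => Matrix.trace (M * PauliOp A)) h
    simp only [Matrix.smul_mul, Matrix.trace_smul, smul_eq_mul, trace_PauliOp_mul,
      if_pos rfl, pphase_self_prod, one_mul] at this
    exact mul_right_cancel₀ h2 this
  · right
    constructor
    · have := congrArg (fun M => Matrix.trace (M * PauliOp A)) h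
      simp only [Matrix.smul_mul, Matrix.trace_smul, smul_eq_mul, trace_PauliOp_mul,
        if_pos rfl, if_neg (Ne.symm hAB), pphase_self_prod, one_mul, mul_zero] at this
      exact (mul_eq_zero.mp this).resolve_right h2
    · have := congrArg (fun M => Matrix.trace (M * PauliOp B)) h
      simp only [Matrix.smul_mul, Matrix.trace_smul, smul_eq_mul, trace_PauliOp_mul,
        if_pos rfl, if_neg hAB, pphase_self_prod, one_mul, mul_zero] at this
      exact (mul_eq_zero.mp (this.symm)).resolve_right h2
lemma cm_PauliOp {n : ℕ} (P Q : Fin n → Fin 4) :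
    cm (PauliOp P) (PauliOp Q)
      = ((∏ i, pphase (P i) (Q i)) - ∏ i, pphase (Q i) (P i))
          • PauliOp (fun i => pmul (P i) (Q i)) := by
  have e : (fun i => pmul (Q i) (P i)) = fun i => pmul (P i) (Q i) :=
    funext fun i => pmul_comm' _ _
  rw [cm, PauliOp_mul, PauliOp_mul, e, sub_smul]

lemma two_I_ne_zero : (2 : ℂ) * Complex.I ≠ 0 :=
  mul_ne_zero two_ne_zero Complex.I_ne_zero

lemma inCommClass_eq {n : ℕ} {X P Q : Fin n → Fin 4} (h : inCommClass X P Q) :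
    X = fun i => pmul (P i) (Q i) := by
  rcases h with h | h <;> rw [cm_PauliOp] at h <;>
    rcases pauli_smul_eq h with ⟨hA, _⟩ | ⟨_, hb⟩
  · exact hA.symm
  · exact absurd hb two_I_ne_zero
  · exact hA.symm
  · exact absurd (neg_eq_zero.mp hb) two_I_ne_zero

lemma PauliOp_mul_self {n : ℕ} (p : Fin n → Fin 4) : PauliOp p * PauliOp p = 1 := by
  rw [PauliOp_mul, pphase_self_prod, one_smul]
  have : (fun i => pmul (p i) (p i)) = (fun _ : Fin n => (0 : Fin 4)) := by
    funext i; exact (pmul_eq_zero_iff _ _).mpr rfl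
  rw [this, PauliOp_zero]

lemma PauliOp_ne_zero {n : ℕ} (p : Fin n → Fin 4) : PauliOp p ≠ 0 := by
  intro h
  have := PauliOp_mul_self p
  rw [h, mul_zero] at this
  exact one_ne_zero this.symm

lemma not_inCommClass_of_commute {n : ℕ} {X P Q : Fin n → Fin 4}
    (hc : ∀ i, P i = 0 ∨ Q i = 0 ∨ P i = Q i) : ¬ inCommClass X P Q := by
  have hz : cm (PauliOp P) (PauliOp Q) = 0 := by
    rw [cm_PauliOp]
    have : (∏ i, pphase (P i) (Q i)) = ∏ i, pphase (Q i) (P i) := by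
      refine Finset.prod_congr rfl fun i _ => ?_
      rcases hc i with h | h | h
      · rw [h, pphase_zero_left, pphase_zero_right]
      · rw [h, pphase_zero_left, pphase_zero_right]
      · rw [h]
    rw [this, sub_self, zero_smul]
  intro h
  rcases h with h | h <;> rw [hz] at h <;>
    rcases (smul_eq_zero.mp h.symm) with h' | h'
  · exact two_I_ne_zero h'
  · exact PauliOp_ne_zero _ h'
  · exact two_I_ne_zero (neg_eq_zero.mp h')
  · exact PauliOp_ne_zero _ h'

lemma mem_psupp {n : ℕ} {p : Fin n → Fin 4} {i : Fin n} : i ∈ psupp p ↔ p i ≠ 0 := by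
  simp [psupp]
lemma geom_sum_le_pow (N k : ℕ) : ∑ j ∈ Finset.range (k + 1), N ^ j ≤ (N + 1) ^ k := by
  induction k with
  | zero => simp
  | succ k ih =>
    rw [Finset.sum_range_succ, pow_succ (N + 1)]
    have h1 : N ^ (k + 1) ≤ (N + 1) ^ k * N := by
      rw [pow_succ]
      exact Nat.mul_le_mul_right _ (Nat.pow_le_pow_left (Nat.le_succ N) k)
    calc ∑ j ∈ Finset.range (k + 1), N ^ j + N ^ (k + 1)
        ≤ (N + 1) ^ k + (N + 1) ^ k * N := Nat.add_le_add ih h1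
      _ = (N + 1) ^ k * (N + 1) := by ring

/-- Counting lemma: a family injecting into small subsets of `B` has few members. -/
lemma card_le_of_inj_small {α β : Type*} [DecidableEq α] [DecidableEq β]
    (F : Finset β) (B : Finset α) (g : β → Finset α) (k : ℕ)
    (hsub : ∀ b ∈ F, g b ⊆ B) (hcard : ∀ b ∈ F, (g b).card ≤ k)
    (hinj : ∀ b₁ ∈ F, ∀ b₂ ∈ F, g b₁ = g b₂ → b₁ = b₂) :
    F.card ≤ (B.card + 1) ^ k := by
  have h1 : F.card = (F.image g).card := (Finset.card_image_of_injOn hinj).symm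
  have h2 : F.image g ⊆ (Finset.range (k + 1)).biUnion (fun j => B.powersetCard j) := by
    intro s hs
    obtain ⟨b, hb, rfl⟩ := Finset.mem_image.mp hs
    refine Finset.mem_biUnion.mpr ⟨(g b).card, Finset.mem_range.mpr ?_, ?_⟩
    · exact Nat.lt_succ_of_le (hcard b hb)
    · exact Finset.mem_powersetCard.mpr ⟨hsub b hb, rfl⟩
  calc F.card = (F.image g).card := h1
    _ ≤ ((Finset.range (k + 1)).biUnion (fun j => B.powersetCard j)).card :=
        Finset.card_le_card h2
    _ ≤ ∑ j ∈ Finset.range (k + 1), (B.powersetCard j).card := Finset.card_biUnion_le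
    _ = ∑ j ∈ Finset.range (k + 1), B.card.choose j := by
        simp [Finset.card_powersetCard]
    _ ≤ ∑ j ∈ Finset.range (k + 1), B.card ^ j :=
        Finset.sum_le_sum fun j _ => Nat.choose_le_pow _ _
    _ ≤ (B.card + 1) ^ k := geom_sum_le_pow _ _
lemma pmul_zero_right (b : Fin 4) : pmul b 0 = b := by revert b; decide

lemma psupp_eq_empty {n : ℕ} {p : Fin n → Fin 4} (h : (psupp p).card ≤ 0) (i : Fin n) :
    p i = 0 := by
  have : psupp p = ∅ := Finset.card_eq_zero.mp (Nat.le_zero.mp h)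
  by_contra hc
  exact Finset.notMem_empty i (this ▸ mem_psupp.mpr hc)

lemma mem_SX_iff {n k k' : ℕ} {X : Fin n → Fin 4} {PQ : (Fin n → Fin 4) × (Fin n → Fin 4)} :
    PQ ∈ SX n k k' X ↔
      (psupp PQ.1).card ≤ k ∧ (psupp PQ.2).card ≤ k' ∧ inCommClass X PQ.1 PQ.2 := by
  simp [SX]

lemma pattern_mem_props {n k k' : ℕ} {X : Fin n → Fin 4}
    {ST : Finset (Fin n) × Finset (Fin n)}
    (h : ST ∈ (SX n k k' X).image (patternOf X)) :
    ST.1 ∪ ST.2 = psupp X ∧ ST.1.card ≤ k ∧ ST.2.card ≤ k' ∧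
      ST.1 ⊆ psupp X ∧ ST.2 ⊆ psupp X := by
  obtain ⟨PQ, hPQ, rfl⟩ := Finset.mem_image.mp h
  obtain ⟨h1, h2, h3⟩ := mem_SX_iff.mp hPQ
  have hX := inCommClass_eq h3
  have hsub1 : (patternOf X PQ).1 ⊆ psupp X := Finset.inter_subset_right
  have hsub2 : (patternOf X PQ).2 ⊆ psupp X := Finset.inter_subset_right
  refine ⟨?_, ?_, ?_, hsub1, hsub2⟩
  · apply Finset.Subset.antisymm (Finset.union_subset hsub1 hsub2)
    intro i hi
    have hXi : X i ≠ 0 := mem_psupp.mp hi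
    rw [hX] at hXi
    by_cases hP : PQ.1 i = 0
    · have hQ : PQ.2 i ≠ 0 := by
        intro hQ; simp only [hP, hQ] at hXi; exact hXi (pmul_zero_left 0)
      exact Finset.mem_union_right _ (Finset.mem_inter.mpr ⟨mem_psupp.mpr hQ, hi⟩)
    · exact Finset.mem_union_left _ (Finset.mem_inter.mpr ⟨mem_psupp.mpr hP, hi⟩)
  · exact le_trans (Finset.card_le_card Finset.inter_subset_left) h1
  · exact le_trans (Finset.card_le_card Finset.inter_subset_left) h2

lemma part_a (n k k' : ℕ) (X : Fin n → Fin 4) :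
    ((SX n k k' X).image (patternOf X)).card ≤ (2 * (k + k')) ^ k := by
  classical
  set F := (SX n k k' X).image (patternOf X) with hF
  by_cases hk : k = 0
  · subst hk
    simp only [pow_zero]
    refine Finset.card_le_one.mpr fun a ha b hb => ?_
    obtain ⟨ha1, ha2, -, -, -⟩ := pattern_mem_props ha
    obtain ⟨hb1, hb2, -, -, -⟩ := pattern_mem_props hb
    have ea : a.1 = ∅ := Finset.card_eq_zero.mp (Nat.le_zero.mp ha2)
    have eb : b.1 = ∅ := Finset.card_eq_zero.mp (Nat.le_zero.mp hb2)
    have : a.2 = b.2 := by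
      rw [ea] at ha1; rw [eb] at hb1
      simp only [Finset.empty_union] at ha1 hb1
      rw [ha1, hb1]
    exact Prod.ext (ea.trans eb.symm) this
  rcases Finset.eq_empty_or_nonempty F with hFe | ⟨ST₀, hST₀⟩
  · rw [hFe]; exact Nat.zero_le _
  have hm : (psupp X).card ≤ k + k' := by
    obtain ⟨h1, h2, h3, -, -⟩ := pattern_mem_props hST₀
    calc (psupp X).card = (ST₀.1 ∪ ST₀.2).card := by rw [h1]
      _ ≤ ST₀.1.card + ST₀.2.card := Finset.card_union_le _ _
      _ ≤ k + k' := Nat.add_le_add h2 h3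
  set m := (psupp X).card with hmdef
  by_cases hmeq : m = k + k'
  -- tight case: patterns are disjoint, determined by first component
  · have hdisj : ∀ ST ∈ F, ST.2 = psupp X \ ST.1 := by
      intro ST hST
      obtain ⟨h1, h2, h3, hs1, hs2⟩ := pattern_mem_props hST
      have hcc : (ST.1 ∪ ST.2).card + (ST.1 ∩ ST.2).card = ST.1.card + ST.2.card :=
        Finset.card_union_add_card_inter _ _
      rw [h1] at hcc
      have hint : (ST.1 ∩ ST.2).card = 0 := by omega
      have hdis : Disjoint ST.1 ST.2 := by
        rw [Finset.disjoint_iff_inter_eq_empty]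
        exact Finset.card_eq_zero.mp hint
      apply Finset.Subset.antisymm
      · intro i hi
        exact Finset.mem_sdiff.mpr ⟨hs2 hi, fun hS => (Finset.disjoint_left.mp hdis hS) hi⟩
      · intro i hi
        obtain ⟨hiX, hiS⟩ := Finset.mem_sdiff.mp hi
        rcases Finset.mem_union.mp (h1 ▸ hiX) with h | h
        · exact absurd h hiS
        · exact h
    have := card_le_of_inj_small F (psupp X) (fun ST => ST.1) k
      (fun ST hST => (pattern_mem_props hST).2.2.2.1)
      (fun ST hST => (pattern_mem_props hST).2.1)
      (fun a ha b hb hab => by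
        have := (hdisj a ha).trans ((congrArg _ hab).trans (hdisj b hb).symm)
        exact Prod.ext hab this)
    refine le_trans this (Nat.pow_le_pow_left ?_ k)
    omega
  -- loose case: m < k + k', encode pattern into psupp X × Bool
  · have hmlt : m < k + k' := lt_of_le_of_ne hm hmeq
    set B : Finset (Fin n × Bool) := psupp X ×ˢ (Finset.univ : Finset Bool) with hB
    set g : Finset (Fin n) × Finset (Fin n) → Finset (Fin n × Bool) :=
      fun ST => (ST.1 \ ST.2).image (fun i => (i, false)) ∪
        (ST.1 ∩ ST.2).image (fun i => (i, true)) with hg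
    have hmemg : ∀ ST : Finset (Fin n) × Finset (Fin n), ∀ x : Fin n × Bool,
        x ∈ g ST ↔ (x.2 = false ∧ x.1 ∈ ST.1 \ ST.2) ∨ (x.2 = true ∧ x.1 ∈ ST.1 ∩ ST.2) := by
      intro ST x
      simp only [hg, Finset.mem_union, Finset.mem_image]
      constructor
      · rintro (⟨i, hi, rfl⟩ | ⟨i, hi, rfl⟩)
        · exact Or.inl ⟨rfl, hi⟩
        · exact Or.inr ⟨rfl, hi⟩
      · rintro (⟨h2, h1⟩ | ⟨h2, h1⟩)
        · exact Or.inl ⟨x.1, h1, by rw [← h2]⟩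
        · exact Or.inr ⟨x.1, h1, by rw [← h2]⟩
    have hcard := card_le_of_inj_small F B g k
      (fun ST hST => by
        intro x hx
        obtain ⟨-, -, -, hs1, -⟩ := pattern_mem_props hST
        rcases (hmemg ST x).mp hx with ⟨-, h⟩ | ⟨-, h⟩
        · exact Finset.mem_product.mpr ⟨hs1 (Finset.mem_sdiff.mp h).1, Finset.mem_univ _⟩
        · exact Finset.mem_product.mpr ⟨hs1 (Finset.mem_inter.mp h).1, Finset.mem_univ _⟩)
      (fun ST hST => by
        obtain ⟨-, h2, -, -, -⟩ := pattern_mem_props hST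
        calc (g ST).card ≤ ((ST.1 \ ST.2).image (fun i => (i, false))).card +
              ((ST.1 ∩ ST.2).image (fun i => (i, true))).card := Finset.card_union_le _ _
          _ ≤ (ST.1 \ ST.2).card + (ST.1 ∩ ST.2).card :=
              Nat.add_le_add (Finset.card_image_le) (Finset.card_image_le)
          _ = ST.1.card := Finset.card_sdiff_add_card_inter _ _
          _ ≤ k := h2)
      (fun a ha b hb hab => by
        obtain ⟨ha1, -, -, has1, has2⟩ := pattern_mem_props ha
        obtain ⟨hb1, -, -, hbs1, hbs2⟩ := pattern_mem_props hb
        have hfst : a.1 = b.1 := by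
          ext i
          constructor
          · intro hi
            by_cases hit : i ∈ a.2
            · have : ((i, true) : Fin n × Bool) ∈ g a :=
                (hmemg a _).mpr (Or.inr ⟨rfl, Finset.mem_inter.mpr ⟨hi, hit⟩⟩)
              rw [hab] at this
              rcases (hmemg b _).mp this with ⟨h, -⟩ | ⟨-, h⟩
              · exact absurd h (by simp)
              · exact (Finset.mem_inter.mp h).1
            · have : ((i, false) : Fin n × Bool) ∈ g a :=
                (hmemg a _).mpr (Or.inl ⟨rfl, Finset.mem_sdiff.mpr ⟨hi, hit⟩⟩)
              rw [hab] at this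
              rcases (hmemg b _).mp this with ⟨-, h⟩ | ⟨h, -⟩
              · exact (Finset.mem_sdiff.mp h).1
              · exact absurd h (by simp)
          · intro hi
            by_cases hit : i ∈ b.2
            · have : ((i, true) : Fin n × Bool) ∈ g b :=
                (hmemg b _).mpr (Or.inr ⟨rfl, Finset.mem_inter.mpr ⟨hi, hit⟩⟩)
              rw [← hab] at this
              rcases (hmemg a _).mp this with ⟨h, -⟩ | ⟨-, h⟩
              · exact absurd h (by simp)
              · exact (Finset.mem_inter.mp h).1
            · have : ((i, false) : Fin n × Bool) ∈ g b :=
                (hmemg b _).mpr (Or.inl ⟨rfl, Finset.mem_sdiff.mpr ⟨hi, hit⟩⟩)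
              rw [← hab] at this
              rcases (hmemg a _).mp this with ⟨-, h⟩ | ⟨h, -⟩
              · exact (Finset.mem_sdiff.mp h).1
              · exact absurd h (by simp)
        have hsnd : a.2 = b.2 := by
          ext i
          constructor
          · intro hi
            by_cases his : i ∈ a.1
            · have : ((i, true) : Fin n × Bool) ∈ g a :=
                (hmemg a _).mpr (Or.inr ⟨rfl, Finset.mem_inter.mpr ⟨his, hi⟩⟩)
              rw [hab] at this
              rcases (hmemg b _).mp this with ⟨h, -⟩ | ⟨-, h⟩
              · exact absurd h (by simp)
              · exact (Finset.mem_inter.mp h).2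
            · have hiX : i ∈ psupp X := has2 hi
              have : i ∉ b.1 := by rw [← hfst]; exact his
              rcases Finset.mem_union.mp (hb1 ▸ hiX) with h | h
              · exact absurd h this
              · exact h
          · intro hi
            by_cases his : i ∈ b.1
            · have : ((i, true) : Fin n × Bool) ∈ g b :=
                (hmemg b _).mpr (Or.inr ⟨rfl, Finset.mem_inter.mpr ⟨his, hi⟩⟩)
              rw [← hab] at this
              rcases (hmemg a _).mp this with ⟨h, -⟩ | ⟨-, h⟩
              · exact absurd h (by simp)
              · exact (Finset.mem_inter.mp h).2
            · have hiX : i ∈ psupp X := hbs2 hi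
              have : i ∉ a.1 := by rw [hfst]; exact his
              rcases Finset.mem_union.mp (ha1 ▸ hiX) with h | h
              · exact absurd h this
              · exact h
        exact Prod.ext hfst hsnd)
    refine le_trans hcard (Nat.pow_le_pow_left ?_ k)
    have : B.card = m * 2 := by
      rw [hB, Finset.card_product]
      simp [hmdef]
    omega
lemma mem_relevant_iff {n k k' : ℕ} {P Q : Fin n → Fin 4}
    {YST : (Fin n → Fin 4) × Finset (Fin n) × Finset (Fin n)} :
    YST ∈ relevantClasses n k k' P Q ↔
      (∃ R, (P, R) ∈ SX n k k' YST.1 ∧ patternOf YST.1 (P, R) = (YST.2.1, YST.2.2)) ∧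
      (∃ R', (R', Q) ∈ SX n k k' YST.1 ∧ patternOf YST.1 (R', Q) = (YST.2.1, YST.2.2)) := by
  simp [relevantClasses]

/-- Structural facts about a member `(Y, S, T)` of `relevantClasses`. -/
lemma relevant_props {n k k' : ℕ} {P Q : Fin n → Fin 4}
    {YST : (Fin n → Fin 4) × Finset (Fin n) × Finset (Fin n)}
    (h : YST ∈ relevantClasses n k k' P Q) :
    YST.2.1 = psupp P ∩ psupp YST.1 ∧
    YST.2.2 = psupp Q ∩ psupp YST.1 ∧
    psupp YST.1 = YST.2.1 ∪ YST.2.2 ∧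
    (∀ i ∈ YST.2.2, i ∉ YST.2.1 → YST.1 i = Q i) ∧
    YST.2.1.card + (psupp Q \ YST.2.2).card ≤ k := by
  obtain ⟨⟨R, hR, hpat⟩, ⟨R', hR', hpat'⟩⟩ := mem_relevant_iff.mp h
  obtain ⟨Y, S, T⟩ := YST
  simp only at *
  obtain ⟨hPk, hRk', hcl⟩ := mem_SX_iff.mp hR
  obtain ⟨hR'k, hQk', hcl'⟩ := mem_SX_iff.mp hR'
  simp only at hPk hRk' hcl hR'k hQk' hcl'
  have hY1 : Y = fun i => pmul (P i) (R i) := inCommClass_eq hcl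
  have hY2 : Y = fun i => pmul (R' i) (Q i) := inCommClass_eq hcl'
  have hS : psupp P ∩ psupp Y = S := congrArg Prod.fst hpat
  have hT : psupp R ∩ psupp Y = T := congrArg Prod.snd hpat
  have hS' : psupp R' ∩ psupp Y = S := congrArg Prod.fst hpat'
  have hT' : psupp Q ∩ psupp Y = T := congrArg Prod.snd hpat'
  have hYi1 : ∀ i, Y i = pmul (P i) (R i) := fun i => congrFun hY1 i
  have hYi2 : ∀ i, Y i = pmul (R' i) (Q i) := fun i => congrFun hY2 i
  have hsuppY : psupp Y = S ∪ T := by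
    apply Finset.Subset.antisymm
    · intro i hi
      have hYne : Y i ≠ 0 := mem_psupp.mp hi
      by_cases hP : P i = 0
      · have hRne : R i ≠ 0 := by
          intro hc
          rw [hYi1 i, hP, hc] at hYne
          exact hYne (pmul_zero_left 0)
        exact Finset.mem_union_right _
          (hT ▸ Finset.mem_inter.mpr ⟨mem_psupp.mpr hRne, hi⟩)
      · exact Finset.mem_union_left _
          (hS ▸ Finset.mem_inter.mpr ⟨mem_psupp.mpr hP, hi⟩)
    · rw [← hS, ← hT]
      exact Finset.union_subset Finset.inter_subset_right Finset.inter_subset_right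
  refine ⟨hS.symm, hT'.symm, hsuppY, ?_, ?_⟩
  · intro i hiT hiS
    have hiY : i ∈ psupp Y := hsuppY ▸ Finset.mem_union_right _ hiT
    have hR'i : R' i = 0 := by
      by_contra hc
      exact hiS (hS' ▸ Finset.mem_inter.mpr ⟨mem_psupp.mpr hc, hiY⟩)
    rw [hYi2 i, hR'i, pmul_zero_left]
  · -- S ∪ (psupp Q \ T) ⊆ psupp R', disjointly
    have hDsub : psupp Q \ T ⊆ psupp R' := by
      intro i hi
      obtain ⟨hiQ, hiT⟩ := Finset.mem_sdiff.mp hi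
      have hiY : i ∉ psupp Y := fun hc => hiT (hT' ▸ Finset.mem_inter.mpr ⟨hiQ, hc⟩)
      have hYz : Y i = 0 := by
        by_contra hc; exact hiY (mem_psupp.mpr hc)
      have : R' i = Q i := by
        have := hYi2 i
        rw [hYz] at this
        exact (pmul_eq_zero_iff _ _).mp this.symm
      exact mem_psupp.mpr (this ▸ mem_psupp.mp hiQ)
    have hSsub : S ⊆ psupp R' := by
      rw [← hS']; exact Finset.inter_subset_left
    have hdisj : Disjoint S (psupp Q \ T) := by
      rw [Finset.disjoint_left]
      intro i hiS hiD
      obtain ⟨hiQ, hiT⟩ := Finset.mem_sdiff.mp hiD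
      rw [← hS] at hiS
      exact hiT (hT' ▸ Finset.mem_inter.mpr ⟨hiQ, (Finset.mem_inter.mp hiS).2⟩)
    calc S.card + (psupp Q \ T).card = (S ∪ (psupp Q \ T)).card :=
          (Finset.card_union_of_disjoint hdisj).symm
      _ ≤ (psupp R').card :=
          Finset.card_le_card (Finset.union_subset hSsub hDsub)
      _ ≤ k := hR'k
lemma disjSum_eq_iff {α β : Type*} {A₁ A₂ : Finset α} {D₁ D₂ : Finset β}
    (h : A₁.disjSum D₁ = A₂.disjSum D₂) : A₁ = A₂ ∧ D₁ = D₂ := by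
  constructor <;> ext x
  · rw [← Finset.inl_mem_disjSum (t := D₁), h, Finset.inl_mem_disjSum]
  · rw [← Finset.inr_mem_disjSum (s := A₁), h, Finset.inr_mem_disjSum]

lemma part_b_empty {n k k' : ℕ} {P Q : Fin n → Fin 4}
    (hd : psupp P ∩ psupp Q = ∅) : relevantClasses n k k' P Q = ∅ := by
  rw [Finset.eq_empty_iff_forall_notMem]
  intro YST h
  obtain ⟨⟨R, hR, hpat⟩, ⟨R', hR', hpat'⟩⟩ := mem_relevant_iff.mp h
  obtain ⟨hS, hT, hsuppY, -, -⟩ := relevant_props h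
  obtain ⟨hR'k, hQk', hcl'⟩ := mem_SX_iff.mp hR'
  simp only at hcl'
  have hS' : psupp R' ∩ psupp YST.1 = YST.2.1 := congrArg Prod.fst hpat'
  have hYi : ∀ i, YST.1 i = pmul (R' i) (Q i) := fun i => congrFun (inCommClass_eq hcl') i
  refine not_inCommClass_of_commute (X := YST.1) (fun i => ?_) hcl'
  by_cases hQi : Q i = 0
  · exact Or.inr (Or.inl hQi)
  by_cases hiY : i ∈ psupp YST.1
  · left
    by_contra hc
    have hiS : i ∈ YST.2.1 := hS' ▸ Finset.mem_inter.mpr ⟨mem_psupp.mpr hc, hiY⟩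
    rw [hS] at hiS
    have : i ∈ psupp P ∩ psupp Q :=
      Finset.mem_inter.mpr ⟨(Finset.mem_inter.mp hiS).1, mem_psupp.mpr hQi⟩
    rw [hd] at this
    exact Finset.notMem_empty i this
  · right; right
    have hYz : YST.1 i = 0 := by
      by_contra hc; exact hiY (mem_psupp.mpr hc)
    have := hYi i
    rw [hYz] at this
    exact (pmul_eq_zero_iff _ _).mp this.symm

lemma part_b_empty0 {n k k' : ℕ} {P Q : Fin n → Fin 4} (h0 : k = 0 ∨ k' = 0) :
    relevantClasses n k k' P Q = ∅ := by
  rw [Finset.eq_empty_iff_forall_notMem]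
  intro YST h
  obtain ⟨⟨R, hR, hpat⟩, ⟨R', hR', hpat'⟩⟩ := mem_relevant_iff.mp h
  rcases h0 with h0 | h0
  · obtain ⟨hPk, -, hcl⟩ := mem_SX_iff.mp hR
    simp only at hcl hPk
    exact not_inCommClass_of_commute
      (fun i => Or.inl (psupp_eq_empty (h0 ▸ hPk) i)) hcl
  · obtain ⟨-, hQk, hcl'⟩ := mem_SX_iff.mp hR'
    simp only at hcl' hQk
    exact not_inCommClass_of_commute
      (fun i => Or.inr (Or.inl (psupp_eq_empty (h0 ▸ hQk) i))) hcl'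

lemma part_b_count {n k k' : ℕ} (P Q : Fin n → Fin 4)
    (hP : (psupp P).card ≤ k) (hQ : (psupp Q).card ≤ k') :
    (relevantClasses n k k' P Q).card ≤ (4 * (k + k')) ^ k := by
  classical
  by_cases hk : k = 0
  · rw [part_b_empty0 (Or.inl hk)]; simp
  by_cases hk' : k' = 0
  · rw [part_b_empty0 (Or.inr hk')]; simp
  set F := relevantClasses n k k' P Q with hF
  set B : Finset ((Fin n × Fin 4) ⊕ Fin n) :=
    (psupp P ×ˢ (Finset.univ : Finset (Fin 4))).disjSum (psupp Q) with hB
  set g : (Fin n → Fin 4) × Finset (Fin n) × Finset (Fin n) → Finset ((Fin n × Fin 4) ⊕ Fin n) :=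
    fun YST => (YST.2.1.image (fun i => (i, YST.1 i))).disjSum (psupp Q \ YST.2.2) with hg
  have hcard := card_le_of_inj_small F B g k
    (fun YST hYST => by
      obtain ⟨hS, -, -, -, -⟩ := relevant_props hYST
      refine Finset.disjSum_mono ?_ Finset.sdiff_subset
      intro x hx
      obtain ⟨i, hi, rfl⟩ := Finset.mem_image.mp hx
      rw [hS] at hi
      exact Finset.mem_product.mpr ⟨(Finset.mem_inter.mp hi).1, Finset.mem_univ _⟩)
    (fun YST hYST => by
      obtain ⟨-, -, -, -, h5⟩ := relevant_props hYST
      rw [hg]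
      simp only [Finset.card_disjSum]
      exact le_trans (Nat.add_le_add_right Finset.card_image_le _) h5)
    (fun a ha b hb hab => by
      obtain ⟨haS, haT, haY, ha4, -⟩ := relevant_props ha
      obtain ⟨hbS, hbT, hbY, hb4, -⟩ := relevant_props hb
      have hab' : (a.2.1.image (fun i => (i, a.1 i))).disjSum (psupp Q \ a.2.2)
          = (b.2.1.image (fun i => (i, b.1 i))).disjSum (psupp Q \ b.2.2) := hab
      obtain ⟨hA, hD⟩ := disjSum_eq_iff hab' 
      have hTsubQa : a.2.2 ⊆ psupp Q := by rw [haT]; exact Finset.inter_subset_left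
      have hTsubQb : b.2.2 ⊆ psupp Q := by rw [hbT]; exact Finset.inter_subset_left
      have hTeq : a.2.2 = b.2.2 := by
        rw [← Finset.sdiff_sdiff_eq_self hTsubQa, ← Finset.sdiff_sdiff_eq_self hTsubQb, hD]
      have hSeq : a.2.1 = b.2.1 := by
        ext i
        constructor
        · intro hi
          have : ((i, a.1 i) : Fin n × Fin 4) ∈ b.2.1.image (fun j => (j, b.1 j)) := by
            rw [← hA]; exact Finset.mem_image_of_mem _ hi
          obtain ⟨j, hj, hje⟩ := Finset.mem_image.mp this
          rw [show j = i from congrArg Prod.fst hje] at hj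
          exact hj
        · intro hi
          have : ((i, b.1 i) : Fin n × Fin 4) ∈ a.2.1.image (fun j => (j, a.1 j)) := by
            rw [hA]; exact Finset.mem_image_of_mem _ hi
          obtain ⟨j, hj, hje⟩ := Finset.mem_image.mp this
          rw [show j = i from congrArg Prod.fst hje] at hj
          exact hj
      have hYeq : a.1 = b.1 := by
        funext i
        by_cases hiS : i ∈ a.2.1
        · have : ((i, a.1 i) : Fin n × Fin 4) ∈ b.2.1.image (fun j => (j, b.1 j)) := by
            rw [← hA]; exact Finset.mem_image_of_mem _ hiS
          obtain ⟨j, hj, hje⟩ := Finset.mem_image.mp this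
          have hji : j = i := congrArg Prod.fst hje
          have := congrArg Prod.snd hje
          simp only at this
          rw [← this, hji]
        · by_cases hiT : i ∈ a.2.2
          · have e1 : a.1 i = Q i := ha4 i hiT hiS
            have e2 : b.1 i = Q i := hb4 i (hTeq ▸ hiT) (hSeq ▸ hiS)
            rw [e1, e2]
          · have hia : i ∉ psupp a.1 := by
              rw [haY]
              intro hc
              rcases Finset.mem_union.mp hc with hc | hc
              exacts [hiS hc, hiT hc]
            have hib : i ∉ psupp b.1 := by
              rw [hbY]
              intro hc
              rcases Finset.mem_union.mp hc with hc | hc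
              exacts [hiS (hSeq ▸ hc), hiT (hTeq ▸ hc)]
            have e1 : a.1 i = 0 := by by_contra hc; exact hia (mem_psupp.mpr hc)
            have e2 : b.1 i = 0 := by by_contra hc; exact hib (mem_psupp.mpr hc)
            rw [e1, e2]
      exact Prod.ext hYeq (Prod.ext hSeq hTeq))
  refine le_trans hcard (Nat.pow_le_pow_left ?_ k)
  have hBcard : B.card = (psupp P).card * 4 + (psupp Q).card := by
    rw [hB, Finset.card_disjSum, Finset.card_product]
    simp
  omega
/-- Lemma 3.4: Pauli pattern counting. -/
theorem pauli_pattern_counting (n k k' : ℕ) :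
    (∀ X : Fin n → Fin 4,
      ((SX n k k' X).image (patternOf X)).card ≤ (2 * (k + k')) ^ k) ∧
    (∀ P Q : Fin n → Fin 4, (psupp P).card ≤ k → (psupp Q).card ≤ k' →
      (relevantClasses n k k' P Q).card ≤ (4 * (k + k')) ^ k ∧
      (psupp P ∩ psupp Q = ∅ → relevantClasses n k k' P Q = ∅)) := by
  exact ⟨part_a n k k', fun P Q hP hQ => ⟨part_b_count P Q hP hQ, fun hd => part_b_empty hd⟩⟩
end
end

section
/- Observable-based Trotter error expansion (Lemma 4.1). Let X, H, H₀ be Hermitian N×N complex matrices and t ∈ ℝ. Then e^{−iH₀t} e^{iHt} X e^{−iHt} e^{iH₀t} − e^{i(H−H₀)t} X e^{−i(H−H₀)t} = Σ_{ℓ≥2} ((it)^ℓ/ℓ!)·C_ℓ, where the series converges absolutely and, for each ℓ ≥ 2, there exist an integer m_ℓ ≤ 2^ℓ·ℓ², signs c_1,…,c_{m_ℓ} ∈ {−1,1}, and bit-strings S_1,T_1,…,S_{m_ℓ},T_{m_ℓ} with len(S_j) + len(T_j) = ℓ − 2 for each j, such that C_ℓ = Σ_{j=1}^{m_ℓ}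 c_j · [(−H₀, H)_{S_j}, [[−H₀, H], [(−H₀, H)_{T_j}, X]]]. In particular each summand of C_ℓ is an order-(ℓ−1) nested commutator of copies of −H₀ and H together with one copy of [−H₀, H], with X in the center. -/
open Complex Matrix
open scoped BigOperators

noncomputable section

/-- The bivariate nested commutator `[(X,Y)_S, A]`: bit `false` (`0`) selects `X`, and bit
`true` (`1`) selects `Y`; the first entry of the list is the outermost commutator. -/
def bivComm {α : Type*} [Ring α] (X Y : α) : List Bool → α → α
  | [], A => A
  | b :: S, A => cm (if b then Y else X) (bivComm X Y S A)

set_option linter.unusedSectionVars false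
set_option synthInstance.maxHeartbeats 1000000
set_option maxHeartbeats 2000000

namespace TrotterAux

variable {α : Type*} [Ring α]

def word (P Q : α) : List Bool → α
  | [] => 1
  | b :: s => (if b then Q else P) * word P Q s

@[simp] lemma word_nil (P Q : α) : word P Q [] = 1 := rfl
@[simp] lemma word_cons (P Q : α) (b s) :
    word P Q (b :: s) = (if b then Q else P) * word P Q s := rfl

lemma word_append (P Q : α) (s t : List Bool) :
    word P Q (s ++ t) = word P Q s * word P Q t := by
  induction s with
  | nil => simp
  | cons b s ih => simp [ih, mul_assoc]

lemma word_replicate_false (P Q : α) (k : ℕ) :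
    word P Q (List.replicate k false) = P ^ k := by
  induction k with
  | zero => simp
  | succ k ih => rw [List.replicate_succ, word_cons, ih, if_neg (by simp), pow_succ']

lemma word_replicate_true (P Q : α) (k : ℕ) :
    word P Q (List.replicate k true) = Q ^ k := by
  induction k with
  | zero => simp
  | succ k ih => rw [List.replicate_succ, word_cons, ih, if_pos rfl, pow_succ']

def wsum (P Q : α) (L : List (List Bool × List Bool)) : α :=
  (L.map (fun p => word P Q p.1 * (P * Q - Q * P) * word P Q p.2)).sum

@[simp] lemma wsum_nil (P Q : α) : wsum P Q [] = 0 := rfl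

@[simp] lemma wsum_cons (P Q : α) (p L) :
    wsum P Q (p :: L) = word P Q p.1 * (P * Q - Q * P) * word P Q p.2 + wsum P Q L := by
  simp [wsum]

lemma wsum_append (P Q : α) (L M : List (List Bool × List Bool)) :
    wsum P Q (L ++ M) = wsum P Q L + wsum P Q M := by
  simp [wsum]

lemma wsum_cons_map (P Q : α) (b : Bool) (L : List (List Bool × List Bool)) :
    wsum P Q (L.map fun p => (b :: p.1, p.2)) = (if b then Q else P) * wsum P Q L := by
  induction L with
  | nil => simp
  | cons p L ih => simp [ih, mul_add, mul_assoc]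

/-- the corrections produced when moving one `Q` left past `k` `P`'s, with `l` `Q`'s behind. -/
def insL (k l : ℕ) : List (List Bool × List Bool) :=
  (List.range k).map fun i =>
    (List.replicate i false, List.replicate (k - 1 - i) false ++ List.replicate l true)

@[simp] lemma insL_zero (l : ℕ) : insL 0 l = [] := rfl

@[simp] lemma insL_length (k l : ℕ) : (insL k l).length = k := by simp [insL]

lemma insL_succ (k l : ℕ) :
    insL (k + 1) l = ([], List.replicate k false ++ List.replicate l true) ::
      (insL k l).map (fun p => (false :: p.1, p.2)) := by
  rw [insL, List.range_succ_eq_map, List.map_cons]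
  refine congrArg₂ List.cons (by simp) ?_
  rw [insL, List.map_map, List.map_map]
  refine List.map_congr_left fun i _ => ?_
  simp only [Function.comp_apply, List.replicate_succ]
  have h2 : k + 1 - 1 - (i + 1) = k - 1 - i := by omega
  rw [h2]

lemma ins_key (P Q : α) (k l : ℕ) :
    Q * (P ^ k * Q ^ l) = P ^ k * Q ^ l * Q - wsum P Q (insL k l) := by
  induction k with
  | zero =>
    simp [pow_succ, pow_succ', mul_assoc, ← pow_mul_comm']
  | succ k ih =>
    have h1 : Q * (P ^ (k + 1) * Q ^ l)
        = (Q * P) * (P ^ k * Q ^ l) := by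
      rw [pow_succ']; noncomm_ring
    have h2 : (Q * P) * (P ^ k * Q ^ l)
        = P * (Q * (P ^ k * Q ^ l)) - (P * Q - Q * P) * (P ^ k * Q ^ l) := by
      noncomm_ring
    rw [h1, h2, ih, insL_succ, wsum_cons, wsum_cons_map, if_neg (by simp),
      word_nil, word_append, word_replicate_false, word_replicate_true]
    rw [pow_succ' (a := P) (n := k)]
    noncomm_ring

lemma pascal (P Q : α) (n : ℕ) :
    ∑ k ∈ Finset.range (n + 2), ((n + 1).choose k) • (P ^ k * Q ^ (n + 1 - k))
      = P * ∑ k ∈ Finset.range (n + 1), (n.choose k) • (P ^ k * Q ^ (n - k))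
        + ∑ k ∈ Finset.range (n + 1), (n.choose k) • (P ^ k * Q ^ (n - k) * Q) := by
  have hpow : ∀ i : ℕ, Q ^ (n + 1 - (i + 1)) = Q ^ (n - i) := by
    intro i; congr 1; omega
  rw [Finset.sum_range_succ' (fun k => ((n + 1).choose k) • (P ^ k * Q ^ (n + 1 - k))) (n + 1)]
  have e1 : ∀ i, (n + 1).choose (i + 1) • (P ^ (i + 1) * Q ^ (n + 1 - (i + 1)))
      = n.choose i • (P ^ (i + 1) * Q ^ (n - i)) + n.choose (i + 1) • (P ^ (i + 1) * Q ^ (n - i)) := by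
    intro i
    rw [hpow i, Nat.choose_succ_succ, add_nsmul]
  simp only [e1]
  rw [Finset.sum_add_distrib]
  have e2 : P * ∑ k ∈ Finset.range (n + 1), (n.choose k) • (P ^ k * Q ^ (n - k))
      = ∑ k ∈ Finset.range (n + 1), n.choose k • (P ^ (k + 1) * Q ^ (n - k)) := by
    rw [Finset.mul_sum]
    refine Finset.sum_congr rfl fun k _ => ?_
    rw [mul_smul_comm, ← mul_assoc, ← pow_succ']
  have e3 : ∑ k ∈ Finset.range (n + 1), (n.choose k) • (P ^ k * Q ^ (n - k) * Q)
      = ∑ i ∈ Finset.range n, n.choose (i + 1) • (P ^ (i + 1) * Q ^ (n - i)) + Q ^ (n + 1) := by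
    have h : ∀ k ∈ Finset.range (n + 1), (n.choose k) • (P ^ k * Q ^ (n - k) * Q)
        = (n.choose k) • (P ^ k * Q ^ (n + 1 - k)) := by
      intro k hk
      have hk' : k ≤ n := Nat.lt_succ_iff.mp (Finset.mem_range.mp hk)
      rw [mul_assoc, ← pow_succ]
      have : n - k + 1 = n + 1 - k := by omega
      rw [this]
    rw [Finset.sum_congr rfl h,
      Finset.sum_range_succ' (fun k => (n.choose k) • (P ^ k * Q ^ (n + 1 - k))) n]
    simp only [hpow, Nat.choose_zero_right, pow_zero, one_mul, Nat.add_sub_cancel_left, one_nsmul,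
      Nat.sub_zero]
  rw [e2, e3]
  have e4 : ∑ i ∈ Finset.range (n + 1), n.choose (i + 1) • (P ^ (i + 1) * Q ^ (n - i))
      = ∑ i ∈ Finset.range n, n.choose (i + 1) • (P ^ (i + 1) * Q ^ (n - i)) := by
    rw [Finset.sum_range_succ, Nat.choose_succ_self, zero_nsmul, add_zero]
  rw [e4]
  simp only [Nat.choose_zero_right, pow_zero, one_mul, one_nsmul, Nat.add_sub_cancel_left]
  abel

def rep {β : Type*} : ℕ → List β → List β
  | 0, _ => []
  | m + 1, l => l ++ rep m l

@[simp] lemma rep_length {β : Type*} (m : ℕ) (l : List β) : (rep m l).length = m * l.length := by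
  induction m with
  | zero => simp [rep]
  | succ m ih => simp [rep, ih, Nat.succ_mul, Nat.add_comm]

lemma rep_wsum (P Q : α) (m : ℕ) (l : List (List Bool × List Bool)) :
    wsum P Q (rep m l) = m • wsum P Q l := by
  induction m with
  | zero => simp [rep]
  | succ m ih => rw [rep, wsum_append, ih, succ_nsmul']

lemma rep_mem {β : Type*} {m : ℕ} {l : List β} {x : β} (hx : x ∈ rep m l) : x ∈ l := by
  induction m with
  | zero => simp [rep] at hx
  | succ m ih =>
    rw [rep, List.mem_append] at hx
    exact hx.elim id ih

def catAll {β : Type*} : List (List β) → List β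
  | [] => []
  | l :: ls => l ++ catAll ls

lemma catAll_length {β : Type*} (ls : List (List β)) :
    (catAll ls).length = (ls.map List.length).sum := by
  induction ls with
  | nil => simp [catAll]
  | cons l ls ih => simp [catAll, ih]

lemma catAll_wsum (P Q : α) (ls : List (List (List Bool × List Bool))) :
    wsum P Q (catAll ls) = (ls.map (wsum P Q)).sum := by
  induction ls with
  | nil => simp [catAll]
  | cons l ls ih => simp [catAll, wsum_append, ih]

lemma catAll_mem {β : Type*} {ls : List (List β)} {x : β} (hx : x ∈ catAll ls) :
    ∃ l ∈ ls, x ∈ l := by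
  induction ls with
  | nil => simp [catAll] at hx
  | cons l ls ih =>
    rw [catAll, List.mem_append] at hx
    rcases hx with h | h
    · exact ⟨l, List.mem_cons_self, h⟩
    · obtain ⟨l', hl', hx'⟩ := ih h
      exact ⟨l', List.mem_cons_of_mem _ hl', hx'⟩

lemma list_range_map_sum {M : Type*} [AddCommMonoid M] (n : ℕ) (f : ℕ → M) :
    ((List.range n).map f).sum = ∑ k ∈ Finset.range n, f k := by
  induction n with
  | zero => simp
  | succ n ih => rw [List.range_succ, List.map_append, List.sum_append, Finset.sum_range_succ, ih]; simp

/-- The correction list for one full expansion step. -/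
def corrT (n : ℕ) : List (List Bool × List Bool) :=
  catAll ((List.range (n + 1)).map fun k => rep (n.choose k) (insL k (n - k)))

lemma corrT_wsum (P Q : α) (n : ℕ) :
    wsum P Q (corrT n) = ∑ k ∈ Finset.range (n + 1), (n.choose k) • wsum P Q (insL k (n - k)) := by
  rw [corrT, catAll_wsum, List.map_map,
    list_range_map_sum (n + 1) (wsum P Q ∘ fun k => rep (n.choose k) (insL k (n - k)))]
  exact Finset.sum_congr rfl fun k _ => rep_wsum P Q _ _

lemma corrT_length (n : ℕ) : (corrT n).length ≤ 2 ^ n * n := by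
  rw [corrT, catAll_length, List.map_map]
  have : ((List.range (n + 1)).map fun k => (rep (n.choose k) (insL k (n - k))).length).sum
      = ∑ k ∈ Finset.range (n + 1), n.choose k * k := by
    rw [list_range_map_sum]
    exact Finset.sum_congr rfl fun k _ => by simp
  rw [show ((List.range (n+1)).map ((List.length ∘ fun k => rep (n.choose k) (insL k (n - k))))) = ((List.range (n+1)).map fun k => (rep (n.choose k) (insL k (n - k))).length) from rfl, this]
  calc ∑ k ∈ Finset.range (n + 1), n.choose k * k
      ≤ ∑ k ∈ Finset.range (n + 1), n.choose k * n := by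
        refine Finset.sum_le_sum fun k hk => ?_
        exact Nat.mul_le_mul_left _ (Nat.lt_succ_iff.mp (Finset.mem_range.mp hk))
    _ = 2 ^ n * n := by rw [← Finset.sum_mul, Nat.sum_range_choose]

lemma corrT_mem {n : ℕ} {p : List Bool × List Bool} (hp : p ∈ corrT n) :
    p.1.length + p.2.length + 2 = n + 1 := by
  obtain ⟨l, hl, hpl⟩ := catAll_mem hp
  rw [List.mem_map] at hl
  obtain ⟨k, hk, rfl⟩ := hl
  rw [List.mem_range] at hk
  have hp' := rep_mem hpl
  rw [insL, List.mem_map] at hp'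
  obtain ⟨i, hi, rfl⟩ := hp'
  rw [List.mem_range] at hi
  simp only [List.length_replicate, List.length_append]
  omega

lemma decomp (P Q : α) (n : ℕ) :
    ∃ L : List (List Bool × List Bool),
      L.length ≤ 2 ^ n * n ^ 2 ∧
      (∀ p ∈ L, p.1.length + p.2.length + 2 = n) ∧
      ∑ k ∈ Finset.range (n + 1), (n.choose k) • (P ^ k * Q ^ (n - k))
        = (P + Q) ^ n + wsum P Q L := by
  induction n with
  | zero => exact ⟨[], by simp, by simp, by simp⟩
  | succ n ih =>
    obtain ⟨L, hlen, hmem, hsum⟩ := ih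
    refine ⟨(L.map fun p => (false :: p.1, p.2)) ++ ((L.map fun p => (true :: p.1, p.2)) ++ corrT n),
      ?_, ?_, ?_⟩
    · simp only [List.length_append, List.length_map]
      have h1 : (corrT n).length ≤ 2 ^ n * n := corrT_length n
      have h2 : 2 ^ n > 0 := Nat.pow_pos (by norm_num)
      calc L.length + (L.length + (corrT n).length)
          ≤ 2 ^ n * n ^ 2 + (2 ^ n * n ^ 2 + 2 ^ n * n) := by
            gcongr
        _ ≤ 2 ^ (n + 1) * (n + 1) ^ 2 := by ring_nf; nlinarith [h2]
    · intro p hp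
      simp only [List.mem_append, List.mem_map] at hp
      rcases hp with ⟨q, hq, rfl⟩ | ⟨q, hq, rfl⟩ | h
      · have := hmem q hq; simp only [List.length_cons]; omega
      · have := hmem q hq; simp only [List.length_cons]; omega
      · have := corrT_mem h; omega
    · have key : ∑ k ∈ Finset.range (n + 1), (n.choose k) • (P ^ k * Q ^ (n - k) * Q)
          = Q * ∑ k ∈ Finset.range (n + 1), (n.choose k) • (P ^ k * Q ^ (n - k))
            + wsum P Q (corrT n) := by
        rw [Finset.mul_sum, corrT_wsum, ← Finset.sum_add_distrib]
        refine Finset.sum_congr rfl fun k _ => ?_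
        rw [mul_smul_comm, ← smul_add]
        congr 1
        rw [ins_key]
        abel
      rw [pascal, key, hsum]
      rw [wsum_append, wsum_append, wsum_cons_map, wsum_cons_map, if_neg (by simp), if_pos rfl]
      have expand : (P + Q) ^ (n + 1) = P * (P + Q) ^ n + Q * (P + Q) ^ n := by
        rw [pow_succ']; noncomm_ring
      rw [expand]
      noncomm_ring

section Analytic

open NormedSpace

variable {𝔸 : Type*} [NormedRing 𝔸] [NormedAlgebra ℂ 𝔸] [CompleteSpace 𝔸]

/-- Left-multiplication as a continuous linear map. -/
def mL (c : 𝔸) : 𝔸 →L[ℂ] 𝔸 := ContinuousLinearMap.mul ℂ 𝔸 c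

/-- Right-multiplication as a continuous linear map. -/
def mR (c : 𝔸) : 𝔸 →L[ℂ] 𝔸 := (ContinuousLinearMap.mul ℂ 𝔸).flip c

@[simp] lemma mL_apply (c z : 𝔸) : mL c z = c * z := rfl
@[simp] lemma mR_apply (c z : 𝔸) : mR c z = z * c := rfl

local instance instT : IsScalarTower ℂ (𝔸 →L[ℂ] 𝔸) (𝔸 →L[ℂ] 𝔸) := by
  constructor
  intro c T S
  ext z
  simp [smul_eq_mul, ContinuousLinearMap.mul_apply]

local instance instC : SMulCommClass ℂ (𝔸 →L[ℂ] 𝔸) (𝔸 →L[ℂ] 𝔸) := by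
  constructor
  intro c T S
  ext z
  simp [smul_eq_mul, ContinuousLinearMap.mul_apply]

lemma apply_exp (T : 𝔸 →L[ℂ] 𝔸) (Y : 𝔸) :
    HasSum (fun n : ℕ => ((n.factorial : ℂ))⁻¹ • (T ^ n) Y) (NormedSpace.exp T Y) := by
  have h := NormedSpace.exp_series_hasSum_exp' (𝕂 := ℂ) T
  have h2 := h.mapL (ContinuousLinearMap.apply ℂ 𝔸 Y)
  simpa using h2

lemma mL_pow_apply (c Y : 𝔸) (n : ℕ) : ((mL c) ^ n) Y = c ^ n * Y := by
  induction n with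
  | zero => simp
  | succ n ih =>
    rw [pow_succ', ContinuousLinearMap.mul_apply, ih, mL_apply, pow_succ', mul_assoc]

lemma mR_pow_apply (c Y : 𝔸) (n : ℕ) : ((mR c) ^ n) Y = Y * c ^ n := by
  induction n with
  | zero => simp
  | succ n ih =>
    rw [pow_succ', ContinuousLinearMap.mul_apply, ih, mR_apply, pow_succ, mul_assoc]

lemma exp_mL_apply (c Y : 𝔸) : NormedSpace.exp (mL c) Y = NormedSpace.exp c * Y := by
  have h1 := apply_exp (mL c) Y
  simp only [mL_pow_apply] at h1
  have h2 := (NormedSpace.exp_series_hasSum_exp' (𝕂 := ℂ) c).mapL (mR Y)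
  simp only [mR_apply, smul_mul_assoc] at h2
  exact h1.unique h2

lemma exp_mR_apply (c Y : 𝔸) : NormedSpace.exp (mR c) Y = Y * NormedSpace.exp c := by
  have h1 := apply_exp (mR c) Y
  simp only [mR_pow_apply] at h1
  have h2 := (NormedSpace.exp_series_hasSum_exp' (𝕂 := ℂ) c).mapL (mL Y)
  simp only [mL_apply, mul_smul_comm] at h2
  exact h1.unique h2

lemma exp_conj_apply (c Y : 𝔸) :
    NormedSpace.exp (mL c - mR c) Y = NormedSpace.exp c * Y * NormedSpace.exp (-c) := by
  have hsub : mL c - mR c = mL c + mR (-c) := by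
    ext z
    simp [sub_eq_add_neg]
  have hcomm : Commute (mL c) (mR (-c)) := by
    refine ContinuousLinearMap.ext fun z => ?_
    simp only [ContinuousLinearMap.mul_apply, mL_apply, mR_apply, mul_assoc]
  letI : NormedAlgebra ℚ (𝔸 →L[ℂ] 𝔸) := NormedAlgebra.restrictScalars ℚ ℂ (𝔸 →L[ℂ] 𝔸)
  rw [hsub, NormedSpace.exp_add_of_commute hcomm, ContinuousLinearMap.mul_apply,
    exp_mR_apply, exp_mL_apply, mul_assoc]


lemma list_sum_apply' (l : List (𝔸 →L[ℂ] 𝔸)) (Y : 𝔸) :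
    (l.sum) Y = (l.map (fun T => T Y)).sum := by
  induction l with
  | nil => simp
  | cons T l ih => simp [ih]

lemma word_apply (A B Y : 𝔸) (s : List Bool) :
    (word (mL A - mR A) (mL B - mR B) s) Y = bivComm A B s Y := by
  induction s with
  | nil => simp [bivComm]
  | cons b s ih =>
    rw [word_cons, bivComm, ContinuousLinearMap.mul_apply, ih]
    cases b <;> simp [cm]

lemma mid_apply (A B Y : 𝔸) :
    (((mL A - mR A) * (mL B - mR B) - (mL B - mR B) * (mL A - mR A))) Y
      = cm (cm A B) Y := by
  simp only [ContinuousLinearMap.sub_apply, ContinuousLinearMap.mul_apply, mL_apply, mR_apply,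
    cm]
  noncomm_ring

theorem aux_main (u : ℂ) (A B X : 𝔸) :
    ∃ C : ℕ → 𝔸,
      HasSum (fun ℓ : ℕ => if 2 ≤ ℓ then (u ^ ℓ / (Nat.factorial ℓ : ℂ)) • C ℓ else 0)
        (NormedSpace.exp (u • A) * NormedSpace.exp (u • B) * X * NormedSpace.exp (-(u • B)) * NormedSpace.exp (-(u • A))
          - NormedSpace.exp (u • (A + B)) * X * NormedSpace.exp (-(u • (A + B)))) ∧
      (∃ r : ℝ, 0 ≤ r ∧ ∀ ℓ : ℕ, ‖C ℓ‖ ≤ 2 * ‖X‖ * r ^ ℓ) ∧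
      (∀ ℓ : ℕ, 2 ≤ ℓ → ∃ L : List (List Bool × List Bool),
        L.length ≤ 2 ^ ℓ * ℓ ^ 2 ∧ (∀ p ∈ L, p.1.length + p.2.length + 2 = ℓ) ∧
        C ℓ = (L.map fun p => bivComm A B p.1 (cm (cm A B) (bivComm A B p.2 X))).sum) := by
  set P : 𝔸 →L[ℂ] 𝔸 := mL A - mR A with hPdef
  set Q : 𝔸 →L[ℂ] 𝔸 := mL B - mR B with hQdef
  set W : ℕ → (𝔸 →L[ℂ] 𝔸) := fun n =>
    (∑ k ∈ Finset.range (n + 1), (n.choose k) • (P ^ k * Q ^ (n - k))) - (P + Q) ^ n with hWdef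
  have hsc : ∀ (v : ℂ) (c : 𝔸), mL (v • c) - mR (v • c) = v • (mL c - mR c) := by
    intro v c
    ext z
    simp [smul_sub, smul_mul_assoc, mul_smul_comm]
  have hadd : mL (A + B) - mR (A + B) = P + Q := by
    ext z
    simp only [ContinuousLinearMap.sub_apply, ContinuousLinearMap.add_apply, mL_apply, mR_apply,
      hPdef, hQdef, add_mul, mul_add]
    abel
  -- the two exponential series
  set f : ℕ → (𝔸 →L[ℂ] 𝔸) := fun n => ((n.factorial : ℂ))⁻¹ • (u • P) ^ n with hfdef
  set g : ℕ → (𝔸 →L[ℂ] 𝔸) := fun n => ((n.factorial : ℂ))⁻¹ • (u • Q) ^ n with hgdef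
  have hf : HasSum f (NormedSpace.exp (u • P)) := NormedSpace.exp_series_hasSum_exp' _
  have hg : HasSum g (NormedSpace.exp (u • Q)) := NormedSpace.exp_series_hasSum_exp' _
  have hfn : Summable fun n => ‖f n‖ := NormedSpace.norm_expSeries_summable' _
  have hgn : Summable fun n => ‖g n‖ := NormedSpace.norm_expSeries_summable' _
  have hprod : Summable fun n => ∑ kl ∈ Finset.HasAntidiagonal.antidiagonal n, f kl.1 * g kl.2 :=
    summable_sum_mul_antidiagonal_of_summable_norm' hfn hf.summable hgn hg.summable
  have htsum : (∑' n, ∑ kl ∈ Finset.HasAntidiagonal.antidiagonal n, f kl.1 * g kl.2)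
      = NormedSpace.exp (u • P) * NormedSpace.exp (u • Q) := by
    rw [← tsum_mul_tsum_eq_tsum_sum_antidiagonal_of_summable_norm hfn hgn,
      hf.tsum_eq, hg.tsum_eq]
  have h1 : HasSum (fun n => ∑ kl ∈ Finset.HasAntidiagonal.antidiagonal n, f kl.1 * g kl.2)
      (NormedSpace.exp (u • P) * NormedSpace.exp (u • Q)) := htsum ▸ hprod.hasSum
  have hterm : ∀ n : ℕ, ∑ kl ∈ Finset.HasAntidiagonal.antidiagonal n, f kl.1 * g kl.2
      = (u ^ n * ((n.factorial : ℂ))⁻¹) •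
        ∑ k ∈ Finset.range (n + 1), (n.choose k) • (P ^ k * Q ^ (n - k)) := by
    intro n
    rw [Finset.Nat.sum_antidiagonal_eq_sum_range_succ_mk, Finset.smul_sum]
    refine Finset.sum_congr rfl fun k hk => ?_
    have hk' : k ≤ n := Nat.lt_succ_iff.mp (Finset.mem_range.mp hk)
    rw [hfdef, hgdef]
    simp only [smul_pow]
    rw [smul_smul, smul_smul, smul_mul_smul_comm, ← Nat.cast_smul_eq_nsmul ℂ (n.choose k),
      smul_smul]
    congr 1
    have hkf : ((k.factorial : ℂ)) ≠ 0 := Nat.cast_ne_zero.mpr (Nat.factorial_ne_zero _)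
    have hlf : (((n - k).factorial : ℂ)) ≠ 0 := Nat.cast_ne_zero.mpr (Nat.factorial_ne_zero _)
    have hnf : ((n.factorial : ℂ)) ≠ 0 := Nat.cast_ne_zero.mpr (Nat.factorial_ne_zero _)
    have hchoose : (n.choose k : ℂ) * (k.factorial : ℂ) * ((n - k).factorial : ℂ)
        = (n.factorial : ℂ) := by
      have := Nat.choose_mul_factorial_mul_factorial hk'
      push_cast [← this]
      ring
    have hpow : u ^ k * u ^ (n - k) = u ^ n := by
      rw [← pow_add]
      congr 1
      omega
    field_simp
    rw [← hpow]
    rw [← hchoose]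
    ring
  simp only [hterm] at h1
  have h2 : HasSum (fun n : ℕ => (u ^ n * ((n.factorial : ℂ))⁻¹) • (P + Q) ^ n)
      (NormedSpace.exp (u • (P + Q))) := by
    have h := NormedSpace.exp_series_hasSum_exp' (𝕂 := ℂ) (u • (P + Q))
    have : ∀ n : ℕ, ((n.factorial : ℂ))⁻¹ • (u • (P + Q)) ^ n
        = (u ^ n * ((n.factorial : ℂ))⁻¹) • (P + Q) ^ n := by
      intro n
      rw [smul_pow, smul_smul, mul_comm]
    simpa only [this] using h
  have hdiff := h1.sub h2
  replace hdiff : HasSum (fun n : ℕ => (u ^ n * ((n.factorial : ℂ))⁻¹) •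
      ((∑ k ∈ Finset.range (n + 1), (n.choose k) • (P ^ k * Q ^ (n - k))) - (P + Q) ^ n))
      (NormedSpace.exp (u • P) * NormedSpace.exp (u • Q) - NormedSpace.exp (u • (P + Q))) := by
    have e : (fun n : ℕ => (u ^ n * ((n.factorial : ℂ))⁻¹) •
        ((∑ k ∈ Finset.range (n + 1), (n.choose k) • (P ^ k * Q ^ (n - k))) - (P + Q) ^ n))
        = fun n : ℕ => (u ^ n * ((n.factorial : ℂ))⁻¹) •
          (∑ k ∈ Finset.range (n + 1), (n.choose k) • (P ^ k * Q ^ (n - k)))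
          - (u ^ n * ((n.factorial : ℂ))⁻¹) • (P + Q) ^ n := funext fun n => smul_sub _ _ _
    rw [e]
    exact hdiff
  have heval := hdiff.mapL (ContinuousLinearMap.apply ℂ 𝔸 X)
  simp only [ContinuousLinearMap.apply_apply, ContinuousLinearMap.smul_apply,
    ContinuousLinearMap.sub_apply] at heval
  refine ⟨fun n => (W n) X, ?_, ?_, ?_⟩
  · -- HasSum part
    have hWa : ∀ n : ℕ, (W n) X
        = (∑ k ∈ Finset.range (n + 1), (n.choose k) • (P ^ k * Q ^ (n - k))) X
          - ((P + Q) ^ n) X := by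
      intro n
      rw [hWdef]
      simp [ContinuousLinearMap.sub_apply]
    -- identify the sum value
    have hP' : u • P = mL (u • A) - mR (u • A) := by rw [hPdef, hsc]
    have hQ' : u • Q = mL (u • B) - mR (u • B) := by rw [hQdef, hsc]
    have hPQ' : u • (P + Q) = mL (u • (A + B)) - mR (u • (A + B)) := by rw [← hadd, hsc]
    have hv1 : (NormedSpace.exp (u • P) * NormedSpace.exp (u • Q)) X
        = NormedSpace.exp (u • A) * NormedSpace.exp (u • B) * X * NormedSpace.exp (-(u • B)) * NormedSpace.exp (-(u • A)) := by
      rw [ContinuousLinearMap.mul_apply, hQ', exp_conj_apply, hP', exp_conj_apply]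
      noncomm_ring
    have hv2 : (NormedSpace.exp (u • (P + Q))) X
        = NormedSpace.exp (u • (A + B)) * X * NormedSpace.exp (-(u • (A + B))) := by
      rw [hPQ', exp_conj_apply]
    have hW0 : (W 0) X = 0 := by
      rw [hWdef]
      simp
    have hW1 : (W 1) X = 0 := by
      have hw : W 1 = 0 := by
        rw [hWdef]
        simp [Finset.sum_range_succ]
        abel
      rw [hw]
      rfl
    have hfun : (fun ℓ : ℕ => if 2 ≤ ℓ then (u ^ ℓ / (Nat.factorial ℓ : ℂ)) • ((W ℓ) X) else 0)
        = fun n : ℕ => (u ^ n * ((n.factorial : ℂ))⁻¹) • ((W n) X) := by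
      funext n
      match n with
      | 0 => simp [hW0]
      | 1 => simp [hW1]
      | (m + 2) => rw [if_pos (by omega), div_eq_mul_inv]
    rw [hfun, ← hv1, ← hv2]
    simp only [hWa]
    exact heval
  · -- norm bound
    have opn : ∀ (T : 𝔸 →L[ℂ] 𝔸) (n : ℕ), ‖T ^ n‖ ≤ ‖T‖ ^ n := by
      intro T n
      induction n with
      | zero =>
        simp only [pow_zero]
        exact ContinuousLinearMap.norm_id_le
      | succ n ih =>
        rw [pow_succ, pow_succ]
        calc ‖T ^ n * T‖ ≤ ‖T ^ n‖ * ‖T‖ := norm_mul_le _ _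
          _ ≤ ‖T‖ ^ n * ‖T‖ := by
              exact mul_le_mul_of_nonneg_right ih (norm_nonneg _)
    refine ⟨‖P‖ + ‖Q‖, by positivity, fun ℓ => ?_⟩
    have hb1 : ‖∑ k ∈ Finset.range (ℓ + 1), (ℓ.choose k) • (P ^ k * Q ^ (ℓ - k))‖
        ≤ (‖P‖ + ‖Q‖) ^ ℓ := by
      calc ‖∑ k ∈ Finset.range (ℓ + 1), (ℓ.choose k) • (P ^ k * Q ^ (ℓ - k))‖
          ≤ ∑ k ∈ Finset.range (ℓ + 1), ‖(ℓ.choose k) • (P ^ k * Q ^ (ℓ - k))‖ :=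
            norm_sum_le _ _
        _ ≤ ∑ k ∈ Finset.range (ℓ + 1), (ℓ.choose k : ℝ) * (‖P‖ ^ k * ‖Q‖ ^ (ℓ - k)) := by
            refine Finset.sum_le_sum fun k _ => ?_
            rw [← Nat.cast_smul_eq_nsmul ℝ (ℓ.choose k), norm_smul]
            simp only [Real.norm_natCast]
            refine mul_le_mul_of_nonneg_left ?_ (by positivity)
            calc ‖P ^ k * Q ^ (ℓ - k)‖ ≤ ‖P ^ k‖ * ‖Q ^ (ℓ - k)‖ := norm_mul_le _ _
              _ ≤ ‖P‖ ^ k * ‖Q‖ ^ (ℓ - k) := by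
                  exact mul_le_mul (opn _ _) (opn _ _) (norm_nonneg _) (by positivity)
        _ = (‖P‖ + ‖Q‖) ^ ℓ := by
            rw [add_pow]
            refine Finset.sum_congr rfl fun k _ => ?_
            ring
    have hb2 : ‖(P + Q) ^ ℓ‖ ≤ (‖P‖ + ‖Q‖) ^ ℓ := by
      calc ‖(P + Q) ^ ℓ‖ ≤ ‖P + Q‖ ^ ℓ := opn _ _
        _ ≤ (‖P‖ + ‖Q‖) ^ ℓ := by
            exact pow_le_pow_left₀ (norm_nonneg _) (norm_add_le _ _) _
    calc ‖(W ℓ) X‖ ≤ ‖W ℓ‖ * ‖X‖ := ContinuousLinearMap.le_opNorm _ _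
      _ ≤ ((‖P‖ + ‖Q‖) ^ ℓ + (‖P‖ + ‖Q‖) ^ ℓ) * ‖X‖ := by
          refine mul_le_mul_of_nonneg_right ?_ (norm_nonneg _)
          rw [hWdef]
          exact le_trans (norm_sub_le _ _) (add_le_add hb1 hb2)
      _ = 2 * ‖X‖ * (‖P‖ + ‖Q‖) ^ ℓ := by ring
  · -- structure
    intro ℓ hℓ
    obtain ⟨L, hL1, hL2, hL3⟩ := decomp P Q ℓ
    refine ⟨L, hL1, hL2, ?_⟩
    have hWL : W ℓ = wsum P Q L := by
      have h' : (∑ k ∈ Finset.range (ℓ + 1), (ℓ.choose k) • (P ^ k * Q ^ (ℓ - k))) - (P + Q) ^ ℓ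
          = wsum P Q L := by
        rw [hL3]; abel
      simpa only [hWdef] using h'
    show (W ℓ) X = _
    rw [hWL, wsum, list_sum_apply', List.map_map]
    congr 1
    refine List.map_congr_left fun p _ => ?_
    simp only [Function.comp_apply]
    rw [ContinuousLinearMap.mul_apply, ContinuousLinearMap.mul_apply]
    rw [hPdef, hQdef, word_apply, mid_apply, word_apply]

end Analytic

end TrotterAux

/-- Lemma 4.1: observable-based Trotter error expansion. -/
theorem observable_based_trotter_error {N : ℕ} (X H H0 : Matrix (Fin N) (Fin N) ℂ)
    (hX : X.IsHermitian) (hH : H.IsHermitian) (hH0 : H0.IsHermitian) (t : ℝ) :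
    ∃ C : ℕ → Matrix (Fin N) (Fin N) ℂ,
      HasSum
        (fun ℓ : ℕ =>
          if 2 ≤ ℓ then ((Complex.I * (t : ℂ)) ^ ℓ / (Nat.factorial ℓ : ℂ)) • C ℓ else 0)
        (mexp ((-(Complex.I * (t : ℂ))) • H0) * mexp ((Complex.I * (t : ℂ)) • H) * X *
            mexp ((-(Complex.I * (t : ℂ))) • H) * mexp ((Complex.I * (t : ℂ)) • H0)
          - mexp ((Complex.I * (t : ℂ)) • (H - H0)) * X *
            mexp ((-(Complex.I * (t : ℂ))) • (H - H0))) ∧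
      Summable
        (fun ℓ : ℕ =>
          if 2 ≤ ℓ then |t| ^ ℓ / (Nat.factorial ℓ : ℝ) * frobNorm (C ℓ) else 0) ∧
      ∀ ℓ, 2 ≤ ℓ →
        ∃ mℓ : ℕ, mℓ ≤ 2 ^ ℓ * ℓ ^ 2 ∧
          ∃ (c : Fin mℓ → ℝ) (Sl Tl : Fin mℓ → List Bool),
            (∀ j, c j = 1 ∨ c j = -1) ∧
            (∀ j, (Sl j).length + (Tl j).length = ℓ - 2) ∧
            C ℓ = ∑ j, c j •
              bivComm (-H0) H (Sl j) (cm (cm (-H0) H) (bivComm (-H0) H (Tl j) X)) := by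

  letI : SeminormedRing (Matrix (Fin N) (Fin N) ℂ) := Matrix.linftyOpSemiNormedRing
  letI : NormedRing (Matrix (Fin N) (Fin N) ℂ) := Matrix.linftyOpNormedRing
  letI : NormedAlgebra ℂ (Matrix (Fin N) (Fin N) ℂ) := Matrix.linftyOpNormedAlgebra
  obtain ⟨C, h1, ⟨r, hr0, hr⟩, h3⟩ :=
    TrotterAux.aux_main (Complex.I * (t : ℂ)) (-H0) H X
  have hent : ∀ M : Matrix (Fin N) (Fin N) ℂ, ∀ x y, ‖M x y‖ ≤ ‖M‖ := by
    intro M x y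
    have h1' : ‖M x y‖₊ ≤ ∑ j, ‖M x j‖₊ :=
      Finset.single_le_sum (f := fun j => ‖M x j‖₊) (fun j _ => zero_le) (Finset.mem_univ y)
    have h2' : (∑ j, ‖M x j‖₊) ≤ ‖M‖₊ := by
      rw [Matrix.linfty_opNNNorm_def]
      exact Finset.le_sup (f := fun i => ∑ j, ‖M i j‖₊) (Finset.mem_univ x)
    have := le_trans h1' h2'
    exact_mod_cast this
  have hfrob : ∀ M : Matrix (Fin N) (Fin N) ℂ, frobNorm M ≤ N * ‖M‖ := by
    intro M
    have hsq : (∑ x, ∑ y, ‖M x y‖ ^ 2) ≤ (N : ℝ) ^ 2 * ‖M‖ ^ 2 := by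
      calc (∑ x : Fin N, ∑ y : Fin N, ‖M x y‖ ^ 2)
          ≤ ∑ _x : Fin N, ∑ _y : Fin N, ‖M‖ ^ 2 := by
            refine Finset.sum_le_sum fun x _ => Finset.sum_le_sum fun y _ => ?_
            have := hent M x y
            have h0 : (0:ℝ) ≤ ‖M x y‖ := norm_nonneg _
            nlinarith
        _ = (N : ℝ) ^ 2 * ‖M‖ ^ 2 := by
            simp [Finset.sum_const, Finset.card_univ]
            ring
    calc frobNorm M = Real.sqrt (∑ x, ∑ y, ‖M x y‖ ^ 2) := rfl
      _ ≤ Real.sqrt ((N : ℝ) ^ 2 * ‖M‖ ^ 2) := Real.sqrt_le_sqrt hsq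
      _ = (N : ℝ) * ‖M‖ := by
          rw [show (N : ℝ) ^ 2 * ‖M‖ ^ 2 = ((N : ℝ) * ‖M‖) ^ 2 by ring]
          exact Real.sqrt_sq (by positivity)
  refine ⟨C, ?_, ?_, ?_⟩
  · -- HasSum
    have e0 : ∀ M : Matrix (Fin N) (Fin N) ℂ, mexp M = NormedSpace.exp M := fun _ => rfl
    have harg1 : (-(Complex.I * (t : ℂ))) • H0 = (Complex.I * (t : ℂ)) • (-H0) := by
      rw [neg_smul, smul_neg]
    have harg3 : (-(Complex.I * (t : ℂ))) • H = -((Complex.I * (t : ℂ)) • H) := neg_smul _ _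
    have harg4 : (Complex.I * (t : ℂ)) • H0 = -((Complex.I * (t : ℂ)) • (-H0)) := by
      rw [smul_neg, neg_neg]
    have harg5 : (Complex.I * (t : ℂ)) • (H - H0) = (Complex.I * (t : ℂ)) • ((-H0) + H) := by
      rw [neg_add_eq_sub]
    have harg6 : (-(Complex.I * (t : ℂ))) • (H - H0)
        = -((Complex.I * (t : ℂ)) • ((-H0) + H)) := by
      rw [neg_add_eq_sub, neg_smul]
    simp only [e0]
    rw [harg1, harg3, harg4, harg5, harg6]
    exact h1
  · -- Summable
    have hnn : ∀ M : Matrix (Fin N) (Fin N) ℂ, 0 ≤ frobNorm M := fun M => Real.sqrt_nonneg _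
    refine Summable.of_nonneg_of_le (f := fun ℓ => (N * (2 * ‖X‖)) * ((|t| * r) ^ ℓ / (Nat.factorial ℓ : ℝ))) ?_ ?_ ?_
    · intro ℓ
      by_cases h : 2 ≤ ℓ
      · rw [if_pos h]
        have := hnn (C ℓ)
        positivity
      · rw [if_neg h]
    · intro ℓ
      by_cases h : 2 ≤ ℓ
      · rw [if_pos h]
        calc |t| ^ ℓ / (Nat.factorial ℓ : ℝ) * frobNorm (C ℓ)
            ≤ |t| ^ ℓ / (Nat.factorial ℓ : ℝ) * (N * ‖C ℓ‖) := by
              refine mul_le_mul_of_nonneg_left (hfrob _) (by positivity)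
          _ ≤ |t| ^ ℓ / (Nat.factorial ℓ : ℝ) * (N * (2 * ‖X‖ * r ^ ℓ)) := by
              refine mul_le_mul_of_nonneg_left ?_ (by positivity)
              exact mul_le_mul_of_nonneg_left (hr ℓ) (by positivity)
          _ = (N * (2 * ‖X‖)) * ((|t| * r) ^ ℓ / (Nat.factorial ℓ : ℝ)) := by
              rw [mul_pow]
              ring
      · rw [if_neg h]
        positivity
    · exact ((Real.summable_pow_div_factorial (|t| * r)).mul_left _)
  · -- structure
    intro ℓ hℓ
    obtain ⟨L, hL1, hL2, hL3⟩ := h3 ℓ hℓ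
    refine ⟨L.length, hL1, fun _ => 1, fun j => (L.get j).1, fun j => (L.get j).2,
      fun _ => Or.inl rfl, ?_, ?_⟩
    · intro j
      show (L.get j).1.length + (L.get j).2.length = ℓ - 2
      have := hL2 (L.get j) (L.get_mem j)
      omega
    · rw [hL3]
      have : (L.map fun p => bivComm (-H0) H p.1 (cm (cm (-H0) H) (bivComm (-H0) H p.2 X))).sum
          = ∑ j : Fin L.length,
              (fun p => bivComm (-H0) H p.1 (cm (cm (-H0) H) (bivComm (-H0) H p.2 X))) (L.get j) := by
        conv_lhs => rw [← List.ofFn_get L, List.map_ofFn, List.sum_ofFn]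
        simp
      rw [this]
      refine Finset.sum_congr rfl fun j _ => ?_
      rw [one_smul]
end
end
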